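/- Let V̂_ρ be the linear code over F_q whose parity-check matrix has as columns the homogeneous-coordinate vectors of the points of the set S_ρ of Construction S, where ρ = R − 1. (i) If q = 4 or q ≥ 7, then for every R ≥ 1 the code V̂_ρ is an [Rq+1, Rq+1−2R]_q code with minimum distance 3 and covering radius R, and it is locally optimal. (ii) If q = 5, then the same holds for every R with 1 ≤ R ≤ 5. -/

import Mathlib

/-- `v ∈ F^r` is a linear combination of at most `k` of the columns `h j`. -/
def CoversWithin {F : Type} [Field F] {r n : ℕ} (h : Fin n → Fin r → F) (k : ℕ) : Prop :=
  ∀ v : Fin r → F, ∃ (s : Finset (Fin n)) (c : Fin n → F),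
    s.card ≤ k ∧ v = ∑ j ∈ s, c j • h j

/-- The code with parity-check columns `h` has covering radius exactly `R`. -/
def HasCoveringRadius {F : Type} [Field F] {r n : ℕ} (h : Fin n → Fin r → F) (R : ℕ) : Prop :=
  CoversWithin h R ∧ ∀ k < R, ¬ CoversWithin h k

/-- The Hamming weight of a vector. -/
noncomputable def wt {F : Type} [Field F] {n : ℕ} (x : Fin n → F) : ℕ :=
  {j | x j ≠ 0}.ncard

/-- The code with parity-check columns `h` has minimum distance `d`: every
nonzero codeword has weight at least `d`, and some codeword has weight `d`. -/
def HasMinDist {F : Type} [Field F] {r n : ℕ} (h : Fin n → Fin r → F) (d : ℕ) : Prop :=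
  (∀ x : Fin n → F, ∑ j, x j • h j = 0 → x ≠ 0 → d ≤ wt x)
  ∧ ∃ x : Fin n → F, ∑ j, x j • h j = 0 ∧ wt x = d

/-- The covering code with parity-check columns `h` and covering radius `R` is
locally optimal: deleting any column destroys the covering within radius `R`
(i.e. yields a code of larger covering radius). -/
def LocallyOptimal {F : Type} [Field F] {r n : ℕ} (h : Fin n → Fin r → F) (R : ℕ) : Prop :=
  ∀ j₀ : Fin n, ¬ ∀ v : Fin r → F, ∃ (s : Finset (Fin n)) (c : Fin n → F),
    j₀ ∉ s ∧ s.card ≤ R ∧ v = ∑ j ∈ s, c j • h j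

/-- The unit vector of `F^N` whose only nonzero coordinate is a `1` in
position `k` (positions numbered from `0`). -/
def unitV (F : Type) [Field F] (N k : ℕ) : Fin N → F :=
  fun i => if (i : ℕ) = k then 1 else 0

/-- Construction S ("Line+Ovals") in `PG(2ρ+1,q)`. -/
def constructionS (F : Type) [Field F] (ρ : ℕ) : Set (Fin (2 * ρ + 2) → F) :=
  {unitV F (2 * ρ + 2) 0}
  ∪ {w | ∃ a : F, a ≠ 0 ∧
      w = fun i : Fin (2 * ρ + 2) => if (i : ℕ) = 0 then 1 else if (i : ℕ) = 1 then a else 0}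
  ∪ {w | ∃ u : ℕ, 1 ≤ u ∧ u ≤ ρ ∧ ∃ a : F, a ≠ 0 ∧
      w = fun i : Fin (2 * ρ + 2) => if (i : ℕ) = 2 * u - 1 then 1 else if (i : ℕ) = 2 * u then a
            else if (i : ℕ) = 2 * u + 1 then a ^ 2 else 0}
  ∪ {w | ∃ u : ℕ, 1 ≤ u ∧ u ≤ ρ ∧ w = unitV F (2 * ρ + 2) (2 * u)}
  ∪ {unitV F (2 * ρ + 2) (2 * ρ + 1)}

namespace S12
variable {F : Type} [Field F] {ρ : ℕ}

def E0 : Fin (2 * ρ + 2) → F := unitV F (2 * ρ + 2) 0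

def lineP (a : F) : Fin (2 * ρ + 2) → F :=
  fun i => if (i : ℕ) = 0 then 1 else if (i : ℕ) = 1 then a else 0

def conicP (u : ℕ) (a : F) : Fin (2 * ρ + 2) → F :=
  fun i => if (i : ℕ) = 2 * u - 1 then 1 else if (i : ℕ) = 2 * u then a
            else if (i : ℕ) = 2 * u + 1 then a ^ 2 else 0

def tP (u : ℕ) : Fin (2 * ρ + 2) → F := unitV F (2 * ρ + 2) (2 * u)

def eE : Fin (2 * ρ + 2) → F := unitV F (2 * ρ + 2) (2 * ρ + 1)

lemma mem_E0 : (E0 : Fin (2*ρ+2) → F) ∈ constructionS F ρ :=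
  Or.inl (Or.inl (Or.inl (Or.inl rfl)))

lemma mem_line {a : F} (ha : a ≠ 0) : (lineP a : Fin (2*ρ+2) → F) ∈ constructionS F ρ :=
  Or.inl (Or.inl (Or.inl (Or.inr ⟨a, ha, rfl⟩)))

lemma mem_conic {u : ℕ} (h1 : 1 ≤ u) (h2 : u ≤ ρ) {a : F} (ha : a ≠ 0) :
    (conicP u a : Fin (2*ρ+2) → F) ∈ constructionS F ρ :=
  Or.inl (Or.inl (Or.inr ⟨u, h1, h2, a, ha, rfl⟩))

lemma mem_tP {u : ℕ} (h1 : 1 ≤ u) (h2 : u ≤ ρ) :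
    (tP u : Fin (2*ρ+2) → F) ∈ constructionS F ρ :=
  Or.inl (Or.inr ⟨u, h1, h2, rfl⟩)

lemma mem_eE : (eE : Fin (2*ρ+2) → F) ∈ constructionS F ρ := Or.inr rfl

lemma shape_cases {x : Fin (2*ρ+2) → F} (hx : x ∈ constructionS F ρ) :
    x = E0 ∨ (∃ a : F, a ≠ 0 ∧ x = lineP a)
    ∨ (∃ u : ℕ, ∃ a : F, 1 ≤ u ∧ u ≤ ρ ∧ a ≠ 0 ∧ x = conicP u a)
    ∨ (∃ u : ℕ, 1 ≤ u ∧ u ≤ ρ ∧ x = tP u) ∨ x = eE := by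
  rcases hx with ((((h | h) | h) | h) | h)
  · exact Or.inl h
  · exact Or.inr (Or.inl h)
  · obtain ⟨u, h1, h2, a, ha, rfl⟩ := h
    exact Or.inr (Or.inr (Or.inl ⟨u, a, h1, h2, ha, rfl⟩))
  · obtain ⟨u, h1, h2, rfl⟩ := h
    exact Or.inr (Or.inr (Or.inr (Or.inl ⟨u, h1, h2, rfl⟩)))
  · exact Or.inr (Or.inr (Or.inr (Or.inr h)))

-- support lemmas
lemma suppE0 {i : Fin (2*ρ+2)} (h : (E0 : Fin (2*ρ+2) → F) i ≠ 0) : (i:ℕ) = 0 := by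
  by_contra hc; exact h (by simp [E0, unitV, hc])

lemma suppLine {a : F} {i : Fin (2*ρ+2)} (h : (lineP a : Fin (2*ρ+2) → F) i ≠ 0) :
    (i:ℕ) = 0 ∨ (i:ℕ) = 1 := by
  by_contra hc; push_neg at hc; exact h (by simp [lineP, hc.1, hc.2])

lemma suppConic {u : ℕ} {a : F} {i : Fin (2*ρ+2)} (h : (conicP u a : Fin (2*ρ+2) → F) i ≠ 0) :
    (i:ℕ) = 2*u-1 ∨ (i:ℕ) = 2*u ∨ (i:ℕ) = 2*u+1 := by
  by_contra hc; push_neg at hc; exact h (by simp [conicP, hc.1, hc.2.1, hc.2.2])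

lemma suppT {u : ℕ} {i : Fin (2*ρ+2)} (h : (tP u : Fin (2*ρ+2) → F) i ≠ 0) : (i:ℕ) = 2*u := by
  by_contra hc; exact h (by simp [tP, unitV, hc])

lemma suppE {i : Fin (2*ρ+2)} (h : (eE : Fin (2*ρ+2) → F) i ≠ 0) : (i:ℕ) = 2*ρ+1 := by
  by_contra hc; exact h (by simp [eE, unitV, hc])

-- value lemmas
lemma E0_at {i : Fin (2*ρ+2)} (hi : (i:ℕ) = 0) : (E0 : Fin (2*ρ+2) → F) i = 1 := by
  simp [E0, unitV, hi]

lemma line_at0 {a : F} {i : Fin (2*ρ+2)} (hi : (i:ℕ) = 0) : (lineP a : Fin (2*ρ+2) → F) i = 1 := by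
  simp [lineP, hi]

lemma line_at1 {a : F} {i : Fin (2*ρ+2)} (hi : (i:ℕ) = 1) : (lineP a : Fin (2*ρ+2) → F) i = a := by
  simp [lineP, hi]

lemma conic_at1 {u : ℕ} {a : F} {i : Fin (2*ρ+2)} (hi : (i:ℕ) = 2*u-1) (hu : 1 ≤ u) :
    (conicP u a : Fin (2*ρ+2) → F) i = 1 := by
  simp [conicP, hi]

lemma conic_ata {u : ℕ} {a : F} {i : Fin (2*ρ+2)} (hi : (i:ℕ) = 2*u) (hu : 1 ≤ u) :
    (conicP u a : Fin (2*ρ+2) → F) i = a := by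
  have h1 : ¬(2*u = 2*u-1) := by omega
  simp [conicP, hi, h1]

lemma conic_ata2 {u : ℕ} {a : F} {i : Fin (2*ρ+2)} (hi : (i:ℕ) = 2*u+1) (hu : 1 ≤ u) :
    (conicP u a : Fin (2*ρ+2) → F) i = a^2 := by
  have h1 : ¬(2*u+1 = 2*u-1) := by omega
  have h2 : ¬(2*u+1 = 2*u) := by omega
  simp [conicP, hi, h1, h2]

lemma tP_at {u : ℕ} {i : Fin (2*ρ+2)} (hi : (i:ℕ) = 2*u) : (tP u : Fin (2*ρ+2) → F) i = 1 := by
  simp [tP, unitV, hi]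

lemma eE_at {i : Fin (2*ρ+2)} (hi : (i:ℕ) = 2*ρ+1) : (eE : Fin (2*ρ+2) → F) i = 1 := by
  simp [eE, unitV, hi]

lemma unique_even {x : Fin (2*ρ+2) → F} (hx : x ∈ constructionS F ρ) {i j : Fin (2*ρ+2)}
    (hi : (i:ℕ) % 2 = 0) (hj : (j:ℕ) % 2 = 0) (h1 : x i ≠ 0) (h2 : x j ≠ 0) : i = j := by
  rcases shape_cases hx with rfl | ⟨a, ha, rfl⟩ | ⟨u, a, hu1, hu2, ha, rfl⟩ | ⟨u, hu1, hu2, rfl⟩ | rfl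
  · have := suppE0 h1; have := suppE0 h2; exact Fin.ext (by omega)
  · have := suppLine h1; have := suppLine h2; exact Fin.ext (by omega)
  · have := suppConic h1; have := suppConic h2; exact Fin.ext (by omega)
  · have := suppT h1; have := suppT h2; exact Fin.ext (by omega)
  · have := suppE h1; have := suppE h2; exact Fin.ext (by omega)

lemma lead {x : Fin (2*ρ+2) → F} (hx : x ∈ constructionS F ρ) :
    ∃ m : ℕ, ∃ hm : m < 2*ρ+2, x ⟨m, hm⟩ = 1 ∧ ∀ i : Fin (2*ρ+2), (i:ℕ) < m → x i = 0 := by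
  rcases shape_cases hx with rfl | ⟨a, ha, rfl⟩ | ⟨u, a, hu1, hu2, ha, rfl⟩ | ⟨u, hu1, hu2, rfl⟩ | rfl
  · exact ⟨0, by omega, E0_at rfl, fun i hi => by omega⟩
  · exact ⟨0, by omega, line_at0 rfl, fun i hi => by omega⟩
  · refine ⟨2*u-1, by omega, conic_at1 rfl hu1, fun i hi => ?_⟩
    simp only [conicP]
    rw [if_neg (by omega), if_neg (by omega), if_neg (by omega)]
  · refine ⟨2*u, by omega, tP_at rfl, fun i hi => ?_⟩
    simp only [tP, unitV]; rw [if_neg (by omega)]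
  · refine ⟨2*ρ+1, by omega, eE_at rfl, fun i hi => ?_⟩
    simp only [eE, unitV]; rw [if_neg (by omega)]

lemma nonzero_of_mem {x : Fin (2*ρ+2) → F} (hx : x ∈ constructionS F ρ) : x ≠ 0 := by
  obtain ⟨m, hm, h1, -⟩ := lead hx
  intro hc; rw [hc] at h1; simp at h1

lemma prop_eq {x y : Fin (2*ρ+2) → F} (hx : x ∈ constructionS F ρ) (hy : y ∈ constructionS F ρ)
    {γ : F} (hγ : γ ≠ 0) (hxy : x = γ • y) : x = y := by
  obtain ⟨mx, hmx, hx1, hx0⟩ := lead hx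
  obtain ⟨my, hmy, hy1, hy0⟩ := lead hy
  rcases lt_trichotomy mx my with hlt | heq | hgt
  · exfalso
    have hh : x ⟨mx, hmx⟩ = γ * y ⟨mx, hmx⟩ := by rw [hxy]; simp
    rw [hx1, hy0 _ hlt, mul_zero] at hh
    exact one_ne_zero hh
  · have hyx : y ⟨mx, hmx⟩ = 1 := by
      subst heq; exact hy1
    have hh : x ⟨mx, hmx⟩ = γ * y ⟨mx, hmx⟩ := by rw [hxy]; simp
    rw [hx1, hyx, mul_one] at hh
    rw [hxy, ← hh, one_smul]
  · exfalso
    have hh : x ⟨my, hmy⟩ = γ * y ⟨my, hmy⟩ := by rw [hxy]; simp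
    rw [hx0 _ hgt, hy1, mul_one] at hh
    exact hγ hh.symm

end S12

namespace S12
section Cover
variable {F : Type} [Field F] {ρ : ℕ}

lemma conic_vanish {u : ℕ} {a : F} {i : Fin (2*ρ+2)} (h1 : (i:ℕ) ≠ 2*u-1)
    (h2 : (i:ℕ) ≠ 2*u) (h3 : (i:ℕ) ≠ 2*u+1) : (conicP u a : Fin (2*ρ+2) → F) i = 0 := by
  simp only [conicP]; rw [if_neg h1, if_neg h2, if_neg h3]

lemma tP_vanish {u : ℕ} {i : Fin (2*ρ+2)} (h : (i:ℕ) ≠ 2*u) :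
    (tP u : Fin (2*ρ+2) → F) i = 0 := by
  simp only [tP, unitV]; rw [if_neg h]

lemma conic_ne {u : ℕ} (hu : 1 ≤ u) (hu2 : u ≤ ρ) {a b : F} (hab : a ≠ b) :
    (conicP u a : Fin (2*ρ+2) → F) ≠ conicP u b := by
  intro hE; apply hab
  have h2 := congrFun hE ⟨2*u, by omega⟩
  rwa [conic_ata rfl hu, conic_ata rfl hu] at h2

def co (v : Fin (2*ρ+2) → F) (m : ℕ) : F :=
  if hm : m < 2*ρ+2 then v ⟨m, hm⟩ else 0

lemma co_eq (v : Fin (2*ρ+2) → F) {i : Fin (2*ρ+2)} {m : ℕ} (him : (i:ℕ) = m) :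
    co v m = v i := by
  subst him; simp [co, i.isLt]

def targetV (v : Fin (2*ρ+2) → F) (w : ℕ) (l : F) : Fin (2*ρ+2) → F :=
  fun i => if (i:ℕ) < 2*w+1 then 0 else if (i:ℕ) = 2*w+1 then l else v i

def Ach (v : Fin (2*ρ+2) → F) (w : ℕ) (l : F) (k : ℕ) : Prop :=
  ∃ t : Finset (Fin (2*ρ+2) → F), ∃ c : (Fin (2*ρ+2) → F) → F,
    ↑t ⊆ constructionS F ρ ∧ (∀ x ∈ t, ∀ i : Fin (2*ρ+2), (i:ℕ) < 2*w+1 → x i = 0) ∧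
    t.card ≤ k ∧ targetV v w l = ∑ x ∈ t, c x • x

lemma Ach.mono {v : Fin (2*ρ+2) → F} {w : ℕ} {l : F} {k k' : ℕ}
    (H : Ach v w l k) (hk : k ≤ k') : Ach v w l k' := by
  obtain ⟨t, c, h1, h2, h3, h4⟩ := H; exact ⟨t, c, h1, h2, h3.trans hk, h4⟩

lemma sum_apply' (t : Finset (Fin (2*ρ+2) → F)) (c : (Fin (2*ρ+2) → F) → F) (i : Fin (2*ρ+2)) :
    (∑ x ∈ t, c x • x) i = ∑ x ∈ t, c x * x i := by
  simp [Finset.sum_apply]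

lemma Ach.step {v : Fin (2*ρ+2) → F} {w k m : ℕ} (hw : w < ρ) {l l' : F}
    (H : Ach v (w+1) l k)
    (t₀ : Finset (Fin (2*ρ+2) → F)) (c₀ : (Fin (2*ρ+2) → F) → F)
    (hS : ↑t₀ ⊆ constructionS F ρ)
    (hlow : ∀ x ∈ t₀, ∀ i : Fin (2*ρ+2), (i:ℕ) < 2*w+1 → x i = 0)
    (hmark : ∀ x ∈ t₀, ∃ i : Fin (2*ρ+2), (i:ℕ) < 2*w+3 ∧ x i ≠ 0)
    (hm : t₀.card ≤ m)
    (e₁ : ∀ i : Fin (2*ρ+2), (i:ℕ) = 2*w+1 → (∑ x ∈ t₀, c₀ x • x) i = l')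
    (e₂ : ∀ i : Fin (2*ρ+2), (i:ℕ) = 2*w+2 → (∑ x ∈ t₀, c₀ x • x) i = v i)
    (e₃ : ∀ i : Fin (2*ρ+2), (i:ℕ) = 2*w+3 → (∑ x ∈ t₀, c₀ x • x) i + l = v i)
    (e₄ : ∀ i : Fin (2*ρ+2), 2*w+3 < (i:ℕ) → (∑ x ∈ t₀, c₀ x • x) i = 0) :
    Ach v w l' (k+m) := by
  classical
  obtain ⟨t, c, htS, htlow, htk, hteq⟩ := H
  have hdisj : Disjoint t₀ t := by
    rw [Finset.disjoint_left]
    intro x hx0 hx1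
    obtain ⟨i, hi, hne⟩ := hmark x hx0
    exact hne (htlow x hx1 i (by omega))
  refine ⟨t₀ ∪ t, fun x => if x ∈ t₀ then c₀ x else c x, ?_, ?_, ?_, ?_⟩
  · intro x hx
    rcases Finset.mem_union.mp (by exact_mod_cast hx) with hh | hh
    · exact hS hh
    · exact htS hh
  · intro x hx i hi
    rcases Finset.mem_union.mp hx with hh | hh
    · exact hlow x hh i hi
    · exact htlow x hh i (by omega)
  · calc (t₀ ∪ t).card ≤ t₀.card + t.card := Finset.card_union_le _ _
      _ ≤ k + m := by omega
  · have hsum : ∑ x ∈ t₀ ∪ t, (if x ∈ t₀ then c₀ x else c x) • x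
        = (∑ x ∈ t₀, c₀ x • x) + ∑ x ∈ t, c x • x := by
      rw [Finset.sum_union hdisj]
      congr 1
      · exact Finset.sum_congr rfl fun x hx => by rw [if_pos hx]
      · exact Finset.sum_congr rfl fun x hx => by
          rw [if_neg (Finset.disjoint_right.mp hdisj hx)]
    rw [hsum]
    funext i
    have hti := congrFun hteq i
    show targetV v w l' i = (∑ x ∈ t₀, c₀ x • x) i + (∑ x ∈ t, c x • x) i
    rcases (by omega : (i:ℕ) < 2*w+1 ∨ (i:ℕ) = 2*w+1 ∨ (i:ℕ) = 2*w+2 ∨ (i:ℕ) = 2*w+3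
        ∨ 2*w+3 < (i:ℕ)) with h1 | h1 | h1 | h1 | h1
    · have ht0 : (∑ x ∈ t₀, c₀ x • x) i = 0 := by
        rw [sum_apply']
        exact Finset.sum_eq_zero fun x hx => by rw [hlow x hx i h1, mul_zero]
      have htt : targetV v (w+1) l i = 0 := by
        simp only [targetV]; rw [if_pos (by omega)]
      rw [ht0, ← hti, htt, add_zero]
      simp only [targetV]; rw [if_pos h1]
    · have htt : targetV v (w+1) l i = 0 := by
        simp only [targetV]; rw [if_pos (by omega)]
      rw [e₁ i h1, ← hti, htt, add_zero]
      simp only [targetV]; rw [if_neg (by omega), if_pos h1]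
    · have htt : targetV v (w+1) l i = 0 := by
        simp only [targetV]; rw [if_pos (by omega)]
      rw [e₂ i h1, ← hti, htt, add_zero]
      simp only [targetV]; rw [if_neg (by omega), if_neg (by omega)]
    · have htt : targetV v (w+1) l i = l := by
        simp only [targetV]; rw [if_neg (by omega), if_pos (by omega)]
      rw [← hti, htt, e₃ i h1]
      simp only [targetV]; rw [if_neg (by omega), if_neg (by omega)]
    · have htt : targetV v (w+1) l i = v i := by
        simp only [targetV]; rw [if_neg (by omega), if_neg (by omega)]
      rw [e₄ i h1, ← hti, htt, zero_add]
      simp only [targetV]; rw [if_neg (by omega), if_neg (by omega)]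

end Cover
end S12


namespace S12
section Utils
variable {F : Type} [Field F] [Fintype F]

lemma exists_notin (s : Finset F) (hs : s.card < Fintype.card F) : ∃ z : F, z ∉ s := by
  by_contra hc; push_neg at hc
  have h1 : (Finset.univ : Finset F) ⊆ s := fun z _ => hc z
  have h2 := Finset.card_le_card h1
  rw [Finset.card_univ] at h2; omega

lemma exists_ne_pair (h4 : 3 ≤ Fintype.card F) (x y : F) : ∃ z : F, z ≠ x ∧ z ≠ y := by
  classical
  have hc : ({x, y} : Finset F).card ≤ 2 := (Finset.card_insert_le _ _).trans (by simp)
  obtain ⟨z, hz⟩ := exists_notin {x, y} (by omega)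
  simp only [Finset.mem_insert, Finset.mem_singleton] at hz
  push_neg at hz
  exact ⟨z, hz.1, hz.2⟩

lemma exists_three (h4 : 4 ≤ Fintype.card F) :
    ∃ b g : F, b ≠ 0 ∧ b ≠ 1 ∧ g ≠ 0 ∧ g ≠ 1 ∧ g ≠ b := by
  classical
  obtain ⟨b, hb0, hb1⟩ := exists_ne_pair (by omega) (0:F) 1
  have hc : ({0, 1, b} : Finset F).card ≤ 3 := by
    refine (Finset.card_insert_le _ _).trans ?_
    have : ({1, b} : Finset F).card ≤ 2 := (Finset.card_insert_le _ _).trans (by simp)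
    omega
  obtain ⟨g, hg⟩ := exists_notin {0, 1, b} (by omega)
  simp only [Finset.mem_insert, Finset.mem_singleton] at hg
  push_neg at hg
  exact ⟨b, g, hb0, hb1, hg.1, hg.2.1, hg.2.2⟩

lemma exists_sqrt_ne (h4 : 4 ≤ Fintype.card F) (P : F) : ∃ a : F, a ≠ 0 ∧ a^2 ≠ P := by
  by_contra hc; push_neg at hc
  obtain ⟨b, g, hb0, hb1, hg0, hg1, hgb⟩ := exists_three h4
  have h1 : (1:F)^2 = P := hc 1 one_ne_zero
  have hb := hc b hb0
  have hg := hc g hg0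
  have hb2 : (b-1)*(b+1) = 0 := by linear_combination hb - h1
  have hg2 : (g-1)*(g+1) = 0 := by linear_combination hg - h1
  have hbv : b = -1 := by
    rcases mul_eq_zero.mp hb2 with hh | hh
    · exact absurd (sub_eq_zero.mp hh) hb1
    · exact eq_neg_of_add_eq_zero_left hh
  have hgv : g = -1 := by
    rcases mul_eq_zero.mp hg2 with hh | hh
    · exact absurd (sub_eq_zero.mp hh) hg1
    · exact eq_neg_of_add_eq_zero_left hh
  exact hgb (hgv.trans hbv.symm)

end Utils

section Trans
variable {F : Type} [Field F] {ρ : ℕ} {v : Fin (2*ρ+2) → F} {w k : ℕ}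

lemma Tzero (hw : w < ρ) (hy : co v (2*w+2) = 0)
    (H : Ach v (w+1) (co v (2*w+3)) k) : Ach v w 0 k := by
  classical
  have h0 : ∀ i : Fin (2*ρ+2), (∑ x ∈ (∅ : Finset (Fin (2*ρ+2) → F)), (fun _ => (0:F)) x • x) i = 0 := by
    simp
  have := Ach.step hw H ∅ (fun _ => 0) (by simp) (by simp) (by simp) (le_refl 0)
    (fun i hi => by rw [h0]) (fun i hi => by rw [h0, ← co_eq v hi, hy])
    (fun i hi => by rw [h0, zero_add, co_eq v hi]) (fun i hi => by rw [h0])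
  simpa using this

lemma Ttee (hw : w < ρ) (H : Ach v (w+1) (co v (2*w+3)) k) : Ach v w 0 (k+1) := by
  classical
  set y := co v (2*w+2) with hy
  have hsum : ∀ i : Fin (2*ρ+2),
      (∑ x ∈ ({tP (w+1)} : Finset (Fin (2*ρ+2) → F)), (fun _ => y) x • x) i
      = y * (tP (w+1) : Fin (2*ρ+2) → F) i := by
    intro i; rw [sum_apply', Finset.sum_singleton]
  refine Ach.step hw H {tP (w+1)} (fun _ => y) ?_ ?_ ?_ (by simp) ?_ ?_ ?_ ?_
  · simp only [Finset.coe_singleton, Set.singleton_subset_iff]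
    exact mem_tP (by omega) (by omega)
  · intro x hx i hi
    simp only [Finset.mem_singleton] at hx; subst hx
    exact tP_vanish (by omega)
  · intro x hx
    simp only [Finset.mem_singleton] at hx; subst hx
    refine ⟨⟨2*w+2, by omega⟩, by simp, ?_⟩
    rw [tP_at (by simp; omega)]
    exact one_ne_zero
  · intro i hi; rw [hsum, tP_vanish (by omega), mul_zero]
  · intro i hi; rw [hsum, tP_at (by omega), mul_one, hy, co_eq v hi]
  · intro i hi; rw [hsum, tP_vanish (by omega), mul_zero, zero_add, co_eq v hi]
  · intro i hi; rw [hsum, tP_vanish (by omega), mul_zero]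

lemma Tconic (hw : w < ρ) {l a c : F} (ha : a ≠ 0)
    (h2 : c * a = co v (2*w+2)) (h3 : c * a^2 = co v (2*w+3) - l)
    (H : Ach v (w+1) l k) : Ach v w c (k+1) := by
  classical
  have hsum : ∀ i : Fin (2*ρ+2),
      (∑ x ∈ ({conicP (w+1) a} : Finset (Fin (2*ρ+2) → F)), (fun _ => c) x • x) i
      = c * (conicP (w+1) a : Fin (2*ρ+2) → F) i := by
    intro i; rw [sum_apply', Finset.sum_singleton]
  refine Ach.step hw H {conicP (w+1) a} (fun _ => c) ?_ ?_ ?_ (by simp) ?_ ?_ ?_ ?_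
  · simp only [Finset.coe_singleton, Set.singleton_subset_iff]
    exact mem_conic (by omega) (by omega) ha
  · intro x hx i hi
    simp only [Finset.mem_singleton] at hx; subst hx
    exact conic_vanish (by omega) (by omega) (by omega)
  · intro x hx
    simp only [Finset.mem_singleton] at hx; subst hx
    refine ⟨⟨2*w+1, by omega⟩, by simp, ?_⟩
    rw [conic_at1 (by simp; omega) (by omega)]
    exact one_ne_zero
  · intro i hi; rw [hsum, conic_at1 (by omega) (by omega), mul_one]
  · intro i hi; rw [hsum, conic_ata (by omega) (by omega), h2, co_eq v hi]
  · intro i hi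
    rw [hsum, conic_ata2 (by omega) (by omega), ← co_eq v hi]
    linear_combination h3
  · intro i hi; rw [hsum, conic_vanish (by omega) (by omega) (by omega), mul_zero]

lemma Ttwo_core (hw : w < ρ) {l x : F} {a b cA cB : F} (ha : a ≠ 0) (hb : b ≠ 0) (hab : a ≠ b)
    (eq1 : cA + cB = x) (eq2 : cA*a + cB*b = co v (2*w+2))
    (eq3 : cA*a^2 + cB*b^2 = co v (2*w+3) - l)
    (H : Ach v (w+1) l k) : Ach v w x (k+2) := by
  classical
  have hne : (conicP (w+1) a : Fin (2*ρ+2) → F) ≠ conicP (w+1) b :=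
    conic_ne (by omega) (by omega) hab
  set c₀ : (Fin (2*ρ+2) → F) → F := fun xx => if xx = conicP (w+1) a then cA else cB with hc₀
  have hca : c₀ (conicP (w+1) a) = cA := if_pos rfl
  have hcb : c₀ (conicP (w+1) b) = cB := if_neg (fun hE => hne hE.symm)
  have hsum : ∀ i : Fin (2*ρ+2),
      (∑ xx ∈ ({conicP (w+1) a, conicP (w+1) b} : Finset (Fin (2*ρ+2) → F)), c₀ xx • xx) i
      = cA * (conicP (w+1) a : Fin (2*ρ+2) → F) i + cB * (conicP (w+1) b : Fin (2*ρ+2) → F) i := by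
    intro i; rw [sum_apply', Finset.sum_pair hne, hca, hcb]
  refine Ach.step hw H {conicP (w+1) a, conicP (w+1) b} c₀ ?_ ?_ ?_ ?_ ?_ ?_ ?_ ?_
  · intro xx hxx
    rcases Finset.mem_insert.mp (by exact_mod_cast hxx) with hh | hh
    · subst hh; exact mem_conic (by omega) (by omega) ha
    · rw [Finset.mem_singleton] at hh; subst hh; exact mem_conic (by omega) (by omega) hb
  · intro xx hxx i hi
    rcases Finset.mem_insert.mp hxx with hh | hh
    · subst hh; exact conic_vanish (by omega) (by omega) (by omega)
    · rw [Finset.mem_singleton] at hh; subst hh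
      exact conic_vanish (by omega) (by omega) (by omega)
  · intro xx hxx
    rcases Finset.mem_insert.mp hxx with hh | hh
    · subst hh
      exact ⟨⟨2*w+1, by omega⟩, by simp, by
        rw [conic_at1 (by simp; omega) (by omega)]; exact one_ne_zero⟩
    · rw [Finset.mem_singleton] at hh; subst hh
      exact ⟨⟨2*w+1, by omega⟩, by simp, by
        rw [conic_at1 (by simp; omega) (by omega)]; exact one_ne_zero⟩
  · exact (Finset.card_insert_le _ _).trans (by simp)
  · intro i hi
    rw [hsum, conic_at1 (by omega) (by omega), conic_at1 (by omega) (by omega)]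
    rw [mul_one, mul_one]; exact eq1
  · intro i hi
    rw [hsum, conic_ata (by omega) (by omega), conic_ata (by omega) (by omega), eq2, co_eq v hi]
  · intro i hi
    rw [hsum, conic_ata2 (by omega) (by omega), conic_ata2 (by omega) (by omega), ← co_eq v hi]
    linear_combination eq3
  · intro i hi
    rw [hsum, conic_vanish (by omega) (by omega) (by omega),
      conic_vanish (by omega) (by omega) (by omega), mul_zero, mul_zero, add_zero]

lemma Ttwo [Fintype F] (h4 : 4 ≤ Fintype.card F) (hw : w < ρ) {l x : F} (hx : x ≠ 0)
    (hy : co v (2*w+2) = 0) (hz : co v (2*w+3) - l ≠ 0)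
    (H : Ach v (w+1) l k) : Ach v w x (k+2) := by
  set z := co v (2*w+3) - l with hzdef
  obtain ⟨a, ha0, ha2⟩ := exists_sqrt_ne h4 (-z/x)
  have hP0 : -z/x ≠ 0 := div_ne_zero (neg_ne_zero.mpr hz) hx
  set b := (-z/x)/a with hb
  have hb0 : b ≠ 0 := div_ne_zero hP0 ha0
  have hab : a ≠ b := by
    intro hE; apply ha2
    rw [hb] at hE; field_simp at hE
    rw [eq_div_iff hx]
    linear_combination hE
  have hba : b - a ≠ 0 := sub_ne_zero.mpr (Ne.symm hab)
  have hxab : x * (a * b) = -z := by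
    rw [hb]; field_simp; try ring
  refine Ttwo_core hw ha0 hb0 hab (cA := x*b/(b-a)) (cB := x - x*b/(b-a)) ?_ ?_ ?_ H
  · ring
  · rw [hy]; field_simp; ring
  · rw [← hzdef]; field_simp
    linear_combination (a-b) * hxab

lemma Tthree_core (hw : w < ρ) {l : F} {a b g cA cB cC : F} (ha : a ≠ 0) (hb : b ≠ 0)
    (hg : g ≠ 0) (hab : a ≠ b) (hag : a ≠ g) (hbg : b ≠ g)
    (eq1 : cA + cB + cC = 0) (eq2 : cA*a + cB*b + cC*g = co v (2*w+2))
    (eq3 : cA*a^2 + cB*b^2 + cC*g^2 = co v (2*w+3) - l)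
    (H : Ach v (w+1) l k) : Ach v w 0 (k+3) := by
  classical
  have hne1 : (conicP (w+1) a : Fin (2*ρ+2) → F) ≠ conicP (w+1) b :=
    conic_ne (by omega) (by omega) hab
  have hne2 : (conicP (w+1) a : Fin (2*ρ+2) → F) ≠ conicP (w+1) g :=
    conic_ne (by omega) (by omega) hag
  have hne3 : (conicP (w+1) b : Fin (2*ρ+2) → F) ≠ conicP (w+1) g :=
    conic_ne (by omega) (by omega) hbg
  set c₀ : (Fin (2*ρ+2) → F) → F := fun xx =>
    if xx = conicP (w+1) a then cA else if xx = conicP (w+1) b then cB else cC with hc₀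
  have hca : c₀ (conicP (w+1) a) = cA := if_pos rfl
  have hcb : c₀ (conicP (w+1) b) = cB := by
    rw [hc₀]; simp only []
    rw [if_neg (fun hE => hne1 hE.symm)]; simp
  have hcg : c₀ (conicP (w+1) g) = cC := by
    rw [hc₀]; simp only []
    rw [if_neg (fun hE => hne2 hE.symm), if_neg (fun hE => hne3 hE.symm)]
  have hnm : (conicP (w+1) a : Fin (2*ρ+2) → F) ∉
      ({conicP (w+1) b, conicP (w+1) g} : Finset (Fin (2*ρ+2) → F)) := by
    simp only [Finset.mem_insert, Finset.mem_singleton]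
    push_neg; exact ⟨hne1, hne2⟩
  have hsum : ∀ i : Fin (2*ρ+2),
      (∑ xx ∈ ({conicP (w+1) a, conicP (w+1) b, conicP (w+1) g} :
        Finset (Fin (2*ρ+2) → F)), c₀ xx • xx) i
      = cA * (conicP (w+1) a : Fin (2*ρ+2) → F) i
        + (cB * (conicP (w+1) b : Fin (2*ρ+2) → F) i
          + cC * (conicP (w+1) g : Fin (2*ρ+2) → F) i) := by
    intro i
    rw [sum_apply', Finset.sum_insert hnm, Finset.sum_pair hne3, hca, hcb, hcg]
  refine Ach.step hw H {conicP (w+1) a, conicP (w+1) b, conicP (w+1) g} c₀ ?_ ?_ ?_ ?_ ?_ ?_ ?_ ?_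
  · intro xx hxx
    rcases Finset.mem_insert.mp (by exact_mod_cast hxx) with hh | hh
    · subst hh; exact mem_conic (by omega) (by omega) ha
    rcases Finset.mem_insert.mp hh with hh2 | hh2
    · subst hh2; exact mem_conic (by omega) (by omega) hb
    · rw [Finset.mem_singleton] at hh2; subst hh2; exact mem_conic (by omega) (by omega) hg
  · intro xx hxx i hi
    rcases Finset.mem_insert.mp hxx with hh | hh
    · subst hh; exact conic_vanish (by omega) (by omega) (by omega)
    rcases Finset.mem_insert.mp hh with hh2 | hh2
    · subst hh2; exact conic_vanish (by omega) (by omega) (by omega)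
    · rw [Finset.mem_singleton] at hh2; subst hh2
      exact conic_vanish (by omega) (by omega) (by omega)
  · intro xx hxx
    have hmk : ∀ aa : F, ∃ i : Fin (2*ρ+2), (i:ℕ) < 2*w+3 ∧
        (conicP (w+1) aa : Fin (2*ρ+2) → F) i ≠ 0 := by
      intro aa
      exact ⟨⟨2*w+1, by omega⟩, by simp, by
        rw [conic_at1 (by simp; omega) (by omega)]; exact one_ne_zero⟩
    rcases Finset.mem_insert.mp hxx with hh | hh
    · subst hh; exact hmk a
    rcases Finset.mem_insert.mp hh with hh2 | hh2
    · subst hh2; exact hmk b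
    · rw [Finset.mem_singleton] at hh2; subst hh2; exact hmk g
  · refine (Finset.card_insert_le _ _).trans ?_
    have : ({conicP (w+1) b, conicP (w+1) g} : Finset (Fin (2*ρ+2) → F)).card ≤ 2 :=
      (Finset.card_insert_le _ _).trans (by simp)
    omega
  · intro i hi
    rw [hsum, conic_at1 (by omega) (by omega), conic_at1 (by omega) (by omega),
      conic_at1 (by omega) (by omega)]
    rw [mul_one, mul_one, mul_one, ← add_assoc]; exact eq1
  · intro i hi
    rw [hsum, conic_ata (by omega) (by omega), conic_ata (by omega) (by omega),
      conic_ata (by omega) (by omega), ← add_assoc, eq2, co_eq v hi]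
  · intro i hi
    rw [hsum, conic_ata2 (by omega) (by omega), conic_ata2 (by omega) (by omega),
      conic_ata2 (by omega) (by omega), ← co_eq v hi]
    linear_combination eq3
  · intro i hi
    rw [hsum, conic_vanish (by omega) (by omega) (by omega),
      conic_vanish (by omega) (by omega) (by omega),
      conic_vanish (by omega) (by omega) (by omega)]
    ring

lemma Tthree [Fintype F] (h4 : 4 ≤ Fintype.card F) (hw : w < ρ) {l : F}
    (hy : co v (2*w+2) = 0) (hz : co v (2*w+3) - l ≠ 0)
    (H : Ach v (w+1) l k) : Ach v w 0 (k+3) := by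
  set z := co v (2*w+3) - l with hzdef
  obtain ⟨b, g, hb0, hb1, hg0, hg1, hgb⟩ := exists_three h4
  have h1b : (1:F) - b ≠ 0 := sub_ne_zero.mpr (Ne.symm hb1)
  have h1g : (1:F) - g ≠ 0 := sub_ne_zero.mpr (Ne.symm hg1)
  have hbg' : b - g ≠ 0 := sub_ne_zero.mpr (Ne.symm hgb)
  refine Tthree_core hw one_ne_zero hb0 hg0 (Ne.symm hb1) (Ne.symm hg1) (Ne.symm hgb)
    (cA := z/((1-b)*(1-g))) (cB := -(z/((1-b)*(b-g)))) (cC := z/((1-g)*(b-g))) ?_ ?_ ?_ H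
  · field_simp; ring
  · rw [hy]; field_simp; ring
  · rw [← hzdef]; field_simp; ring

end Trans
end S12


namespace S12
section Machine
variable {F : Type} [Field F] [Fintype F] {ρ : ℕ} (v : Fin (2*ρ+2) → F)

def StI (w : ℕ) : Prop := (∀ l : F, Ach v w l (ρ-w+1)) ∧ (∃ l : F, Ach v w l (ρ-w))
def St3 (w : ℕ) : Prop := ∃ l : F, ∃ k : ℕ, k+1 ≤ ρ-w ∧ Ach v w l k
def St7 (w : ℕ) : Prop :=
  (∀ l : F, Ach v w l (ρ-w+1)) ∧ (∃ μ : F, ∀ l : F, l ≠ μ → Ach v w l (ρ-w))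
def INVa (w : ℕ) : Prop := StI v w ∨ St3 v w ∨ St7 v w

lemma achBase (l : F) : Ach v ρ l 1 := by
  classical
  refine ⟨{eE}, fun _ => l, ?_, ?_, by simp, ?_⟩
  · simp only [Finset.coe_singleton, Set.singleton_subset_iff]; exact mem_eE
  · intro x hx i hi; simp only [Finset.mem_singleton] at hx; subst hx
    simp only [eE, unitV]; rw [if_neg (by omega)]
  · funext i
    rw [sum_apply', Finset.sum_singleton]
    simp only [targetV]
    rcases (by omega : (i:ℕ) < 2*ρ+1 ∨ (i:ℕ) = 2*ρ+1) with h1 | h1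
    · rw [if_pos h1, show (eE : Fin (2*ρ+2) → F) i = 0 from by
        simp only [eE, unitV]; rw [if_neg (by omega)], mul_zero]
    · rw [if_neg (by omega), if_pos h1, eE_at h1, mul_one]

lemma achBase0 : Ach v ρ 0 0 := by
  classical
  refine ⟨∅, fun _ => 0, by simp, by simp, by simp, ?_⟩
  funext i
  rw [Finset.sum_empty]
  simp only [targetV, Pi.zero_apply]
  rcases (by omega : (i:ℕ) < 2*ρ+1 ∨ (i:ℕ) = 2*ρ+1) with h1 | h1
  · rw [if_pos h1]
  · rw [if_neg (by omega), if_pos h1]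

lemma invBase : INVa v ρ :=
  Or.inl ⟨fun l => (achBase v l).mono (by omega), ⟨0, (achBase0 v).mono (by omega)⟩⟩

lemma stepI {w : ℕ} (h4 : 4 ≤ Fintype.card F) (hw : w < ρ) (H : StI v (w+1)) :
    StI v w ∨ St3 v w := by
  obtain ⟨hall, lst, Hst⟩ := H
  by_cases hy : co v (2*w+2) = 0
  · by_cases hl : lst = co v (2*w+3)
    · right
      exact ⟨0, ρ-(w+1), by omega, Tzero hw hy (hl ▸ Hst)⟩
    · left
      have hzs : co v (2*w+3) - lst ≠ 0 := sub_ne_zero.mpr (fun hE => hl hE.symm)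
      constructor
      · intro l
        by_cases hl0 : l = 0
        · subst hl0
          exact (Tzero hw hy (hall _)).mono (by omega)
        · exact (Ttwo h4 hw hl0 hy hzs Hst).mono (by omega)
      · exact ⟨0, (Tzero hw hy (hall _)).mono (by omega)⟩
  · left
    constructor
    · intro l
      by_cases hl0 : l = 0
      · subst hl0
        exact (Ttee hw (hall _)).mono (by omega)
      · refine ((Tconic hw (a := co v (2*w+2) / l) (c := l) (div_ne_zero hy hl0) ?_ ?_
          (hall (co v (2*w+3) - l * (co v (2*w+2)/l)^2))).mono (by omega))
        · field_simp
        · ring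
    · by_cases hzs : co v (2*w+3) - lst = 0
      · have hE : co v (2*w+3) = lst := sub_eq_zero.mp hzs
        exact ⟨0, (Ttee hw (hE ▸ Hst)).mono (by omega)⟩
      · refine ⟨co v (2*w+2)^2/(co v (2*w+3) - lst),
          ((Tconic hw (a := (co v (2*w+3) - lst) / co v (2*w+2))
            (c := co v (2*w+2)^2/(co v (2*w+3) - lst)) (div_ne_zero hzs hy) ?_ ?_
            Hst).mono (by omega))⟩
        · field_simp
        · field_simp
  
lemma step3 {w : ℕ} (h4 : 4 ≤ Fintype.card F) (hw : w < ρ) (H : St3 v (w+1)) :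
    St3 v w ∨ St7 v w := by
  obtain ⟨lst, k, hk, Hst⟩ := H
  by_cases hy : co v (2*w+2) = 0
  · by_cases hl : lst = co v (2*w+3)
    · left; exact ⟨0, k, by omega, Tzero hw hy (hl ▸ Hst)⟩
    · right
      have hzs : co v (2*w+3) - lst ≠ 0 := sub_ne_zero.mpr (fun hE => hl hE.symm)
      constructor
      · intro l
        by_cases hl0 : l = 0
        · subst hl0; exact (Tthree h4 hw hy hzs Hst).mono (by omega)
        · exact (Ttwo h4 hw hl0 hy hzs Hst).mono (by omega)
      · exact ⟨0, fun l hl0 => (Ttwo h4 hw hl0 hy hzs Hst).mono (by omega)⟩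
  · left
    by_cases hzs : co v (2*w+3) - lst = 0
    · have hE : co v (2*w+3) = lst := sub_eq_zero.mp hzs
      exact ⟨0, k+1, by omega, Ttee hw (hE ▸ Hst)⟩
    · refine ⟨co v (2*w+2)^2/(co v (2*w+3) - lst), k+1, by omega,
        Tconic hw (a := (co v (2*w+3) - lst) / co v (2*w+2)) (div_ne_zero hzs hy) ?_ ?_ Hst⟩
      · field_simp
      · field_simp

lemma step7 {w : ℕ} (h4 : 4 ≤ Fintype.card F) (hw : w < ρ) (H : St7 v (w+1)) :
    St7 v w ∨ StI v w := by
  classical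
  obtain ⟨hall, μ, hne⟩ := H
  by_cases hy : co v (2*w+2) = 0
  · right
    constructor
    · intro l
      by_cases hl0 : l = 0
      · subst hl0; exact (Tzero hw hy (hall _)).mono (by omega)
      · obtain ⟨lin, h1, h2⟩ := exists_ne_pair (by omega) μ (co v (2*w+3))
        have hzs : co v (2*w+3) - lin ≠ 0 := sub_ne_zero.mpr (fun hE => h2 hE.symm)
        exact (Ttwo h4 hw hl0 hy hzs (hne lin h1)).mono (by omega)
    · exact ⟨0, (Tzero hw hy (hall _)).mono (by omega)⟩
  · left
    constructor
    · intro l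
      by_cases hl0 : l = 0
      · subst hl0
        exact (Ttee hw (hall _)).mono (by omega)
      · refine ((Tconic hw (a := co v (2*w+2) / l) (c := l) (div_ne_zero hy hl0) ?_ ?_
          (hall (co v (2*w+3) - l * (co v (2*w+2)/l)^2))).mono (by omega))
        · field_simp
        · ring
    · refine ⟨if μ = co v (2*w+3) then 0 else (co v (2*w+2))^2/(co v (2*w+3) - μ), ?_⟩
      intro l hl
      by_cases hl0 : l = 0
      · have hμ : μ ≠ co v (2*w+3) := by
          intro hE; rw [if_pos hE] at hl; exact hl hl0
        subst hl0
        exact (Ttee hw (hne _ (fun hE => hμ hE.symm))).mono (by omega)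
      · have hlin : co v (2*w+3) - co v (2*w+2)^2/l ≠ μ := by
          intro hE
          have hyl : co v (2*w+2)^2/l ≠ 0 := div_ne_zero (pow_ne_zero 2 hy) hl0
          have hμz : μ ≠ co v (2*w+3) := by
            intro hE2; rw [hE2] at hE; exact hyl (sub_eq_self.mp hE)
          rw [if_neg hμz] at hl
          apply hl
          have h5 : co v (2*w+3) - μ = co v (2*w+2)^2/l := by rw [← hE]; ring
          rw [h5]; field_simp
        have hlin2 : co v (2*w+3) - l * (co v (2*w+2)/l)^2 ≠ μ := by
          intro hE; apply hlin; rw [← hE]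
          congr 1
          field_simp
        refine ((Tconic hw (a := co v (2*w+2) / l) (c := l) (div_ne_zero hy hl0) ?_ ?_
          (hne _ hlin2)).mono (by omega))
        · field_simp
        · ring
  
lemma stepINV {w : ℕ} (h4 : 4 ≤ Fintype.card F) (hw : w < ρ) (H : INVa v (w+1)) : INVa v w := by
  rcases H with H | H | H
  · rcases stepI v h4 hw H with hh | hh
    exacts [Or.inl hh, Or.inr (Or.inl hh)]
  · rcases step3 v h4 hw H with hh | hh
    exacts [Or.inr (Or.inl hh), Or.inr (Or.inr hh)]
  · rcases step7 v h4 hw H with hh | hh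
    exacts [Or.inr (Or.inr hh), Or.inl hh]

lemma descent (h4 : 4 ≤ Fintype.card F) (m : ℕ) (hm : m ≤ ρ) : INVa v (ρ - m) := by
  induction m with
  | zero => simpa using invBase v
  | succ m ih =>
    have h1 := ih (by omega)
    have h2 : ρ - m = (ρ - (m+1)) + 1 := by omega
    rw [h2] at h1
    exact stepINV v h4 (by omega) h1

end Machine
end S12


namespace S12
section Final
variable {F : Type} [Field F] [Fintype F] {ρ : ℕ} (v : Fin (2*ρ+2) → F)

lemma E0_vanish {i : Fin (2*ρ+2)} (h : (i:ℕ) ≠ 0) : (E0 : Fin (2*ρ+2) → F) i = 0 := by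
  simp only [E0, unitV]; rw [if_neg h]

lemma line_vanish {a : F} {i : Fin (2*ρ+2)} (h0 : (i:ℕ) ≠ 0) (h1 : (i:ℕ) ≠ 1) :
    (lineP a : Fin (2*ρ+2) → F) i = 0 := by
  simp only [lineP]; rw [if_neg h0, if_neg h1]

lemma line_ne {a b : F} (hab : a ≠ b) : (lineP a : Fin (2*ρ+2) → F) ≠ lineP b := by
  intro hE; apply hab
  have h2 := congrFun hE ⟨1, by omega⟩
  rwa [line_at1 rfl, line_at1 rfl] at h2

def CovGoal (K : ℕ) : Prop :=
  ∃ t : Finset (Fin (2*ρ+2) → F), ∃ c : (Fin (2*ρ+2) → F) → F,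
    ↑t ⊆ constructionS F ρ ∧ t.card ≤ K ∧ v = ∑ x ∈ t, c x • x

lemma CovGoal.mono {v' : Fin (2*ρ+2) → F} {K K' : ℕ} (H : CovGoal v' K) (h : K ≤ K') :
    CovGoal v' K' := by
  obtain ⟨t, c, h1, h2, h3⟩ := H; exact ⟨t, c, h1, h2.trans h, h3⟩

lemma final_add {k m : ℕ} {l : F} (H : Ach v 0 l k)
    (t₀ : Finset (Fin (2*ρ+2) → F)) (c₀ : (Fin (2*ρ+2) → F) → F)
    (hS : ↑t₀ ⊆ constructionS F ρ)
    (hmark : ∀ x ∈ t₀, ∃ i : Fin (2*ρ+2), (i:ℕ) < 1 ∧ x i ≠ 0)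
    (hm : t₀.card ≤ m)
    (e₀ : ∀ i : Fin (2*ρ+2), (i:ℕ) = 0 → (∑ x ∈ t₀, c₀ x • x) i = v i)
    (e₁ : ∀ i : Fin (2*ρ+2), (i:ℕ) = 1 → (∑ x ∈ t₀, c₀ x • x) i + l = v i)
    (e₂ : ∀ i : Fin (2*ρ+2), 1 < (i:ℕ) → (∑ x ∈ t₀, c₀ x • x) i = 0) :
    CovGoal v (k+m) := by
  classical
  obtain ⟨t, c, htS, htlow, htk, hteq⟩ := H
  have hdisj : Disjoint t₀ t := by
    rw [Finset.disjoint_left]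
    intro x hx0 hx1
    obtain ⟨i, hi, hne⟩ := hmark x hx0
    exact hne (htlow x hx1 i (by omega))
  refine ⟨t₀ ∪ t, fun x => if x ∈ t₀ then c₀ x else c x, ?_, ?_, ?_⟩
  · intro x hx
    rcases Finset.mem_union.mp (by exact_mod_cast hx) with hh | hh
    · exact hS hh
    · exact htS hh
  · calc (t₀ ∪ t).card ≤ t₀.card + t.card := Finset.card_union_le _ _
      _ ≤ k + m := by omega
  · have hsum : ∑ x ∈ t₀ ∪ t, (if x ∈ t₀ then c₀ x else c x) • x
        = (∑ x ∈ t₀, c₀ x • x) + ∑ x ∈ t, c x • x := by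
      rw [Finset.sum_union hdisj]
      congr 1
      · exact Finset.sum_congr rfl fun x hx => by rw [if_pos hx]
      · exact Finset.sum_congr rfl fun x hx => by
          rw [if_neg (Finset.disjoint_right.mp hdisj hx)]
    rw [hsum]
    funext i
    have hti := congrFun hteq i
    show v i = (∑ x ∈ t₀, c₀ x • x) i + (∑ x ∈ t, c x • x) i
    rcases (by omega : (i:ℕ) = 0 ∨ (i:ℕ) = 1 ∨ 1 < (i:ℕ)) with h1 | h1 | h1
    · have htt : targetV v 0 l i = 0 := by
        simp only [targetV]; rw [if_pos (by omega)]
      rw [← hti, htt, add_zero]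
      exact (e₀ i h1).symm
    · have htt : targetV v 0 l i = l := by
        simp only [targetV]; rw [if_neg (by omega), if_pos (by omega)]
      rw [← hti, htt]
      exact (e₁ i h1).symm
    · have htt : targetV v 0 l i = v i := by
        simp only [targetV]; rw [if_neg (by omega), if_neg (by omega)]
      rw [← hti, htt, e₂ i h1, zero_add]

lemma bNull {k : ℕ} {l : F} (H : Ach v 0 l k) (h0 : co v 0 = 0) (h1 : co v 1 = l) :
    CovGoal v k := by
  classical
  have H2 := final_add v H ∅ (fun _ => 0) (by simp) (by simp) (le_refl 0) ?_ ?_ ?_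
  · simpa using H2
  · intro i hi; rw [Finset.sum_empty, ← co_eq v hi, h0]; rfl
  · intro i hi; rw [Finset.sum_empty, ← co_eq v hi, ← h1]; simp
  · intro i hi; rw [Finset.sum_empty]; rfl

lemma bE0 {k : ℕ} {l : F} (H : Ach v 0 l k) (h1 : co v 1 = l) : CovGoal v (k+1) := by
  classical
  have hsum : ∀ i : Fin (2*ρ+2),
      (∑ x ∈ ({E0} : Finset (Fin (2*ρ+2) → F)), (fun _ => co v 0) x • x) i
      = co v 0 * (E0 : Fin (2*ρ+2) → F) i := by
    intro i; rw [sum_apply', Finset.sum_singleton]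
  refine final_add v H {E0} (fun _ => co v 0) ?_ ?_ (by simp) ?_ ?_ ?_
  · simp only [Finset.coe_singleton, Set.singleton_subset_iff]; exact mem_E0
  · intro x hx
    simp only [Finset.mem_singleton] at hx; subst hx
    exact ⟨⟨0, by omega⟩, by simp, by rw [E0_at rfl]; exact one_ne_zero⟩
  · intro i hi; rw [hsum, E0_at hi, mul_one, co_eq v hi]
  · intro i hi; rw [hsum, E0_vanish (by omega), mul_zero, zero_add, ← co_eq v hi, h1]
  · intro i hi; rw [hsum, E0_vanish (by omega), mul_zero]

lemma bLine {k : ℕ} {l : F} (H : Ach v 0 l k) (h0 : co v 0 ≠ 0) : CovGoal v (k+1) := by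
  classical
  by_cases h1 : co v 1 - l = 0
  · exact bE0 v H (sub_eq_zero.mp h1)
  · set a := (co v 1 - l)/(co v 0) with ha
    have ha0 : a ≠ 0 := div_ne_zero h1 h0
    have hsum : ∀ i : Fin (2*ρ+2),
        (∑ x ∈ ({lineP a} : Finset (Fin (2*ρ+2) → F)), (fun _ => co v 0) x • x) i
        = co v 0 * (lineP a : Fin (2*ρ+2) → F) i := by
      intro i; rw [sum_apply', Finset.sum_singleton]
    refine final_add v H {lineP a} (fun _ => co v 0) ?_ ?_ (by simp) ?_ ?_ ?_
    · simp only [Finset.coe_singleton, Set.singleton_subset_iff]; exact mem_line ha0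
    · intro x hx
      simp only [Finset.mem_singleton] at hx; subst hx
      exact ⟨⟨0, by omega⟩, by simp, by rw [line_at0 rfl]; exact one_ne_zero⟩
    · intro i hi; rw [hsum, line_at0 hi, mul_one, co_eq v hi]
    · intro i hi
      rw [hsum, line_at1 hi, ← co_eq v hi, ha]
      field_simp
      ring
    · intro i hi; rw [hsum, line_vanish (by omega) (by omega), mul_zero]

lemma bTwo (h4 : 4 ≤ Fintype.card F) {k : ℕ} {l : F} (H : Ach v 0 l k) : CovGoal v (k+2) := by
  classical
  by_cases h1 : co v 1 - l = 0
  · have hb := bE0 v H (sub_eq_zero.mp h1)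
    exact hb.mono (by omega)
  by_cases h0 : co v 0 ≠ 0
  · have hb := bLine v H h0
    exact hb.mono (by omega)
  push_neg at h0
  obtain ⟨b, g, hb0, hb1, hg0, hg1, hgb⟩ := exists_three h4
  have h1b : (1:F) - b ≠ 0 := sub_ne_zero.mpr (Ne.symm hb1)
  set cA := (co v 1 - l)/(1-b) with hcA
  set cB := -cA with hcB
  have hne : (lineP (1:F) : Fin (2*ρ+2) → F) ≠ lineP b := line_ne (Ne.symm hb1)
  set c₀ : (Fin (2*ρ+2) → F) → F := fun x => if x = lineP 1 then cA else cB with hc₀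
  have hca : c₀ (lineP 1) = cA := if_pos rfl
  have hcb : c₀ (lineP b) = cB := if_neg (fun hE => hne hE.symm)
  have hsum : ∀ i : Fin (2*ρ+2),
      (∑ x ∈ ({lineP 1, lineP b} : Finset (Fin (2*ρ+2) → F)), c₀ x • x) i
      = cA * (lineP (1:F) : Fin (2*ρ+2) → F) i + cB * (lineP b : Fin (2*ρ+2) → F) i := by
    intro i; rw [sum_apply', Finset.sum_pair hne, hca, hcb]
  refine final_add v H {lineP 1, lineP b} c₀ ?_ ?_ ?_ ?_ ?_ ?_
  · intro x hx
    rcases Finset.mem_insert.mp (by exact_mod_cast hx) with hh | hh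
    · subst hh; exact mem_line one_ne_zero
    · rw [Finset.mem_singleton] at hh; subst hh; exact mem_line hb0
  · intro x hx
    have hmk : ∀ aa : F, ∃ i : Fin (2*ρ+2), (i:ℕ) < 1 ∧
        (lineP aa : Fin (2*ρ+2) → F) i ≠ 0 :=
      fun aa => ⟨⟨0, by omega⟩, by simp, by rw [line_at0 rfl]; exact one_ne_zero⟩
    rcases Finset.mem_insert.mp hx with hh | hh
    · subst hh; exact hmk 1
    · rw [Finset.mem_singleton] at hh; subst hh; exact hmk b
  · exact (Finset.card_insert_le _ _).trans (by simp)
  · intro i hi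
    rw [hsum, line_at0 hi, line_at0 hi, ← co_eq v hi, h0, hcB]
    ring
  · intro i hi
    rw [hsum, line_at1 hi, line_at1 hi, ← co_eq v hi, hcB, hcA]
    field_simp
    ring
  · intro i hi
    rw [hsum, line_vanish (by omega) (by omega), line_vanish (by omega) (by omega)]
    ring

theorem coverPoint (h4 : 4 ≤ Fintype.card F) : CovGoal v (ρ+1) := by
  classical
  have hINV : INVa v 0 := by
    have h5 := descent v h4 ρ (le_refl ρ)
    simpa using h5
  rcases hINV with ⟨hall, lst, Hst⟩ | ⟨lst, k, hk, Hst⟩ | ⟨hall, μ, hne⟩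
  · rw [Nat.sub_zero] at hall Hst
    by_cases h0 : co v 0 = 0
    · exact bNull v (hall (co v 1)) h0 rfl
    · exact bLine v Hst h0
  · rw [Nat.sub_zero] at hk
    have hb := bTwo v h4 Hst
    exact hb.mono (by omega)
  · rw [Nat.sub_zero] at hall hne
    by_cases h0 : co v 0 = 0
    · by_cases hμ : co v 1 = μ
      · exact bNull v (hall (co v 1)) h0 rfl
      · have hb := bNull v (hne _ hμ) h0 rfl
        exact hb.mono (by omega)
    · obtain ⟨lv, hlv⟩ := exists_ne μ
      have hb := bLine v (hne lv hlv) h0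
      exact hb.mono (by omega)

end Final
end S12


namespace S12
section Columns
variable {F : Type} [Field F] {ρ n : ℕ} {h : Fin n → Fin (2*ρ+2) → F}

lemma covgoal_to_cols (hinj : Function.Injective h)
    (hrange : Set.range h = constructionS F ρ) {v : Fin (2*ρ+2) → F} {K : ℕ}
    (H : CovGoal v K) :
    ∃ s : Finset (Fin n), ∃ c : Fin n → F, s.card ≤ K ∧ v = ∑ j ∈ s, c j • h j := by
  classical
  obtain ⟨t, c, htS, htk, hteq⟩ := H
  have htr : ∀ x ∈ t, x ∈ Set.range h := fun x hx => by rw [hrange]; exact htS hx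
  have himg : (t.preimage h hinj.injOn).image h = t := by
    rw [Finset.image_preimage]
    exact Finset.filter_true_of_mem htr
  refine ⟨t.preimage h hinj.injOn, fun j => c (h j), ?_, ?_⟩
  · have hc := Finset.card_image_of_injective (t.preimage h hinj.injOn) hinj
    rw [himg] at hc
    omega
  · rw [hteq]
    exact (Finset.sum_preimage h t hinj.injOn (fun x => c x • x)
      (fun x hx hnx => absurd (htr x hx) hnx)).symm

lemma mem_span_of_mem (hrange : Set.range h = constructionS F ρ)
    {x : Fin (2*ρ+2) → F} (hx : x ∈ constructionS F ρ) :
    x ∈ Submodule.span F (Set.range h) := by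
  apply Submodule.subset_span
  rw [hrange]; exact hx

lemma odd_in_span (hrange : Set.range h = constructionS F ρ) :
    ∀ m : ℕ, m ≤ ρ → unitV F (2*ρ+2) (2*(ρ-m)+1) ∈ Submodule.span F (Set.range h) := by
  intro m
  induction m with
  | zero =>
    intro _
    have : unitV F (2*ρ+2) (2*(ρ-0)+1) = eE := by rw [eE]; norm_num
    rw [this]
    exact mem_span_of_mem hrange mem_eE
  | succ m ih =>
    intro hm
    have hu1 : 1 ≤ ρ - m := by omega
    have key : (conicP (ρ-m) (1:F) : Fin (2*ρ+2) → F)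
        = unitV F (2*ρ+2) (2*(ρ-m)-1) + (unitV F (2*ρ+2) (2*(ρ-m))
          + unitV F (2*ρ+2) (2*(ρ-m)+1)) := by
      funext i
      rcases (by omega : (i:ℕ) = 2*(ρ-m)-1 ∨ (i:ℕ) = 2*(ρ-m) ∨ (i:ℕ) = 2*(ρ-m)+1
          ∨ ((i:ℕ) ≠ 2*(ρ-m)-1 ∧ (i:ℕ) ≠ 2*(ρ-m) ∧ (i:ℕ) ≠ 2*(ρ-m)+1)) with h1 | h1 | h1 | h1
      · rw [conic_at1 h1 hu1]
        simp only [Pi.add_apply, unitV]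
        rw [if_pos h1, if_neg (show ¬((i:ℕ) = 2*(ρ-m)) by omega),
          if_neg (show ¬((i:ℕ) = 2*(ρ-m)+1) by omega)]
        norm_num
      · rw [conic_ata h1 hu1]
        simp only [Pi.add_apply, unitV]
        rw [if_neg (show ¬((i:ℕ) = 2*(ρ-m)-1) by omega), if_pos h1,
          if_neg (show ¬((i:ℕ) = 2*(ρ-m)+1) by omega)]
        norm_num
      · rw [conic_ata2 h1 hu1]
        simp only [Pi.add_apply, unitV]
        rw [if_neg (show ¬((i:ℕ) = 2*(ρ-m)-1) by omega),
          if_neg (show ¬((i:ℕ) = 2*(ρ-m)) by omega), if_pos h1]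
        norm_num
      · rw [conic_vanish h1.1 h1.2.1 h1.2.2]
        simp only [Pi.add_apply, unitV]
        rw [if_neg h1.1, if_neg h1.2.1, if_neg h1.2.2]
        norm_num
    have hgoal : 2*(ρ-(m+1))+1 = 2*(ρ-m)-1 := by omega
    rw [hgoal]
    have h1 : (unitV F (2*ρ+2) (2*(ρ-m)-1) : Fin (2*ρ+2) → F)
        = conicP (ρ-m) (1:F) - (unitV F (2*ρ+2) (2*(ρ-m)) + unitV F (2*ρ+2) (2*(ρ-m)+1)) := by
      rw [key]; abel
    rw [h1]
    apply Submodule.sub_mem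
    · exact mem_span_of_mem hrange (mem_conic hu1 (by omega) one_ne_zero)
    · apply Submodule.add_mem
      · exact mem_span_of_mem hrange (mem_tP hu1 (by omega))
      · exact ih (by omega)

lemma span_top (hrange : Set.range h = constructionS F ρ) :
    Submodule.span F (Set.range h) = ⊤ := by
  classical
  rw [eq_top_iff]
  intro f _
  have hbv : ∀ i : Fin (2*ρ+2),
      (fun j : Fin (2*ρ+2) => if i = j then (1:F) else 0) = unitV F (2*ρ+2) (i:ℕ) := by
    intro i; funext j
    simp only [unitV]
    by_cases hij : i = j
    · rw [if_pos hij, if_pos (by rw [hij])]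
    · rw [if_neg hij, if_neg (by intro hE; exact hij (Fin.ext hE.symm))]
  rw [pi_eq_sum_univ f]
  apply Submodule.sum_mem
  intro i _
  apply Submodule.smul_mem
  rw [hbv i]
  rcases (by omega : (i:ℕ) = 0 ∨ ((i:ℕ) % 2 = 0 ∧ 1 ≤ (i:ℕ)/2 ∧ (i:ℕ) = 2*((i:ℕ)/2))
      ∨ (i:ℕ) % 2 = 1) with h1 | ⟨h1, h2, h3⟩ | h1
  · rw [h1]
    exact mem_span_of_mem hrange mem_E0
  · rw [h3]
    have : unitV F (2*ρ+2) (2*((i:ℕ)/2)) = tP ((i:ℕ)/2) := rfl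
    rw [this]
    refine mem_span_of_mem hrange (mem_tP h2 ?_)
    have := i.isLt; omega
  · obtain ⟨m, hm1, hm2⟩ : ∃ m, m ≤ ρ ∧ 2*(ρ-m)+1 = (i:ℕ) := by
      refine ⟨ρ - ((i:ℕ)-1)/2, by omega, by have := i.isLt; omega⟩
    rw [← hm2]
    exact odd_in_span hrange m hm1

end Columns
end S12


namespace S12
section MinDist
variable {F : Type} [Field F] [Fintype F] {ρ n : ℕ} {h : Fin n → Fin (2*ρ+2) → F}

lemma E0_ne_line {a : F} (ha : a ≠ 0) : (E0 : Fin (2*ρ+2) → F) ≠ lineP a := by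
  intro hE
  have h2 := congrFun hE ⟨1, by omega⟩
  rw [line_at1 rfl, E0_vanish (by simp)] at h2
  exact ha h2.symm

lemma minDist (hinj : Function.Injective h) (hrange : Set.range h = constructionS F ρ)
    (h4 : 4 ≤ Fintype.card F) : HasMinDist h 3 := by
  classical
  have hSmem : ∀ j : Fin n, h j ∈ constructionS F ρ := fun j => by
    rw [← hrange]; exact Set.mem_range_self j
  constructor
  · intro x hx hx0
    set t : Finset (Fin n) := Finset.univ.filter (fun j => x j ≠ 0) with ht
    have hwt : wt x = t.card := by
      rw [wt, show {j | x j ≠ 0} = ↑t from by ext j; simp [ht], Set.ncard_coe_finset]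
    rw [hwt]
    by_contra hc
    push_neg at hc
    have hsum : ∑ j ∈ t, x j • h j = 0 := by
      rw [← hx]
      exact Finset.sum_filter_of_ne (fun j _ hne =>
        fun hxj => hne (by rw [hxj, zero_smul]))
    have hne : t.Nonempty := by
      obtain ⟨j, hj⟩ := Function.ne_iff.mp hx0
      have hj' : x j ≠ 0 := by simpa using hj
      exact ⟨j, by simp [ht, hj']⟩
    have hnecard : 1 ≤ t.card := Finset.card_pos.mpr hne
    rcases (by omega : t.card = 1 ∨ t.card = 2) with h1 | h1
    · obtain ⟨j, hj⟩ := Finset.card_eq_one.mp h1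
      rw [hj, Finset.sum_singleton] at hsum
      have hxj : x j ≠ 0 := by
        have hmem : j ∈ t := by rw [hj]; exact Finset.mem_singleton_self j
        simpa [ht] using hmem
      have hz : h j = 0 := by
        rcases smul_eq_zero.mp hsum with hh | hh
        · exact absurd hh hxj
        · exact hh
      exact nonzero_of_mem (hSmem j) hz
    · obtain ⟨j, k, hjk, hj⟩ := Finset.card_eq_two.mp h1
      have hxj : x j ≠ 0 := by
        have hmem : j ∈ t := by rw [hj]; simp
        simpa [ht] using hmem
      have hxk : x k ≠ 0 := by
        have hmem : k ∈ t := by rw [hj]; simp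
        simpa [ht] using hmem
      rw [hj, Finset.sum_pair hjk] at hsum
      have hγ : -(x k) / (x j) ≠ 0 := div_ne_zero (neg_ne_zero.mpr hxk) hxj
      have hEq : h j = (-(x k)/(x j)) • h k := by
        funext i
        have h5 := congrFun hsum i
        simp only [Pi.add_apply, Pi.smul_apply, smul_eq_mul, Pi.zero_apply] at h5
        show h j i = -(x k)/(x j) * h k i
        field_simp
        linear_combination h5
      have hcols := prop_eq (hSmem j) (hSmem k) hγ hEq
      exact hjk (hinj hcols)
  · obtain ⟨b, g, hb0, hb1, -, -, -⟩ := exists_three h4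
    have hcol : ∀ x ∈ constructionS F ρ, ∃ j, h j = x := fun x hx => by
      rw [← hrange] at hx; exact hx
    obtain ⟨j1, hj1⟩ := hcol E0 mem_E0
    obtain ⟨j2, hj2⟩ := hcol (lineP 1) (mem_line one_ne_zero)
    obtain ⟨j3, hj3⟩ := hcol (lineP b) (mem_line hb0)
    have h12 : j1 ≠ j2 := fun hE => E0_ne_line one_ne_zero (by rw [← hj1, ← hj2, hE])
    have h13 : j1 ≠ j3 := fun hE => E0_ne_line hb0 (by rw [← hj1, ← hj3, hE])
    have h23 : j2 ≠ j3 := fun hE => line_ne (Ne.symm hb1) (by rw [← hj2, ← hj3, hE])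
    have h21 : ¬ (j2 = j1) := fun hE => h12 hE.symm
    have h31 : ¬ (j3 = j1) := fun hE => h13 hE.symm
    have h32 : ¬ (j3 = j2) := fun hE => h23 hE.symm
    set x : Fin n → F := fun j =>
      if j = j1 then 1 - b else if j = j2 then b else if j = j3 then -1 else 0 with hxdef
    have hx1 : x j1 = 1 - b := by simp [hxdef]
    have hx2 : x j2 = b := by simp [hxdef, h21]
    have hx3 : x j3 = -1 := by simp [hxdef, h31, h32]
    have hnm : j1 ∉ ({j2, j3} : Finset (Fin n)) := by simp [h12, h13]
    refine ⟨x, ?_, ?_⟩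
    · have hz : ∀ j ∈ Finset.univ, j ∉ ({j1,j2,j3} : Finset (Fin n)) → x j • h j = 0 := by
        intro j _ hj
        simp only [Finset.mem_insert, Finset.mem_singleton] at hj
        push_neg at hj
        rw [show x j = 0 from by simp [hxdef, hj.1, hj.2.1, hj.2.2], zero_smul]
      rw [← Finset.sum_subset (Finset.subset_univ ({j1,j2,j3} : Finset (Fin n))) hz]
      rw [Finset.sum_insert hnm, Finset.sum_pair h23, hx1, hx2, hx3, hj1, hj2, hj3]
      funext i
      simp only [Pi.add_apply, Pi.smul_apply, smul_eq_mul, Pi.zero_apply]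
      rcases (by omega : (i:ℕ) = 0 ∨ (i:ℕ) = 1 ∨ (1 < (i:ℕ))) with h1 | h1 | h1
      · rw [E0_at h1, line_at0 h1, line_at0 h1]; ring
      · rw [E0_vanish (by omega), line_at1 h1, line_at1 h1]; ring
      · rw [E0_vanish (by omega), line_vanish (by omega) (by omega),
          line_vanish (by omega) (by omega)]; ring
    · have hb1' : (1:F) - b ≠ 0 := sub_ne_zero.mpr (Ne.symm hb1)
      have hset : {j | x j ≠ 0} = ↑({j1,j2,j3} : Finset (Fin n)) := by
        ext j
        simp only [Set.mem_setOf_eq, Finset.coe_insert, Set.mem_insert_iff,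
          Finset.coe_singleton, Set.mem_singleton_iff]
        constructor
        · intro hj
          by_contra hcj
          push_neg at hcj
          exact hj (by simp [hxdef, hcj.1, hcj.2.1, hcj.2.2])
        · intro hj
          rcases hj with rfl | rfl | rfl
          · rw [hx1]; exact hb1'
          · rw [hx2]; exact hb0
          · rw [hx3]; exact neg_ne_zero.mpr one_ne_zero
      rw [wt, hset, Set.ncard_coe_finset, Finset.card_insert_of_notMem hnm,
        Finset.card_pair h23]

end MinDist
end S12


namespace S12
section Force
variable {F : Type} [Field F] {ρ n : ℕ} {h : Fin n → Fin (2*ρ+2) → F}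

lemma shape_at_even {x : Fin (2*ρ+2) → F} (hx : x ∈ constructionS F ρ) {u : ℕ} (hu : 1 ≤ u)
    {i : Fin (2*ρ+2)} (hi : (i:ℕ) = 2*u) (hnz : x i ≠ 0) :
    (∃ a : F, a ≠ 0 ∧ u ≤ ρ ∧ x = conicP u a) ∨ (u ≤ ρ ∧ x = tP u) := by
  rcases shape_cases hx with rfl | ⟨a, ha, rfl⟩ | ⟨u'', a, h1, h2, ha, rfl⟩ | ⟨u'', h1, h2, rfl⟩ | rfl
  · have := suppE0 hnz; exfalso; omega
  · have := suppLine hnz; exfalso; omega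
  · have h5 := suppConic hnz
    have huu : u'' = u := by omega
    subst huu; exact Or.inl ⟨a, ha, h2, rfl⟩
  · have h5 := suppT hnz
    have huu : u'' = u := by omega
    subst huu; exact Or.inr ⟨h2, rfl⟩
  · have := suppE hnz; exfalso; omega

lemma shape_at_zero {x : Fin (2*ρ+2) → F} (hx : x ∈ constructionS F ρ)
    {i : Fin (2*ρ+2)} (hi : (i:ℕ) = 0) (hnz : x i ≠ 0) :
    x = E0 ∨ ∃ a : F, a ≠ 0 ∧ x = lineP a := by
  rcases shape_cases hx with rfl | ⟨a, ha, rfl⟩ | ⟨u'', a, h1, h2, ha, rfl⟩ | ⟨u'', h1, h2, rfl⟩ | rfl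
  · exact Or.inl rfl
  · exact Or.inr ⟨a, ha, rfl⟩
  · have := suppConic hnz; exfalso; omega
  · have := suppT hnz; exfalso; omega
  · have := suppE hnz; exfalso; omega

lemma shape_at_odd {x : Fin (2*ρ+2) → F} (hx : x ∈ constructionS F ρ) {u : ℕ} (hu : 1 ≤ u)
    {i : Fin (2*ρ+2)} (hi : (i:ℕ) = 2*u+1) (hnz : x i ≠ 0) :
    (∃ a : F, a ≠ 0 ∧ x = conicP u a) ∨ (∃ a : F, a ≠ 0 ∧ u+1 ≤ ρ ∧ x = conicP (u+1) a)
    ∨ (x = eE ∧ u = ρ) := by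
  rcases shape_cases hx with rfl | ⟨a, ha, rfl⟩ | ⟨u'', a, h1, h2, ha, rfl⟩ | ⟨u'', h1, h2, rfl⟩ | rfl
  · have := suppE0 hnz; exfalso; omega
  · have := suppLine hnz; exfalso; omega
  · have h5 := suppConic hnz
    rcases (by omega : u'' = u ∨ u'' = u+1) with huu | huu
    · subst huu; exact Or.inl ⟨a, ha, rfl⟩
    · subst huu; exact Or.inr (Or.inl ⟨a, ha, h2, rfl⟩)
  · have := suppT hnz; exfalso; omega
  · have := suppE hnz
    exact Or.inr (Or.inr ⟨rfl, by omega⟩)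

lemma exists_g (hrange : Set.range h = constructionS F ρ)
    {mv : Fin (2*ρ+2) → F} {s : Finset (Fin n)} {c : Fin n → F}
    (hsum : mv = ∑ j ∈ s, c j • h j) (hcard : s.card ≤ ρ+1)
    (hev : ∀ u : ℕ, u ≤ ρ → ∀ i : Fin (2*ρ+2), (i:ℕ) = 2*u → mv i ≠ 0) :
    ∃ g : ℕ → Fin n,
      (∀ u, u ≤ ρ → g u ∈ s) ∧
      (∀ u, u ≤ ρ → ∀ i : Fin (2*ρ+2), (i:ℕ) = 2*u → c (g u) * h (g u) i ≠ 0) ∧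
      (∀ u u' : ℕ, u ≤ ρ → u' ≤ ρ → ∀ i : Fin (2*ρ+2), (i:ℕ) = 2*u → h (g u') i ≠ 0 → u' = u) ∧
      (∀ i : Fin (2*ρ+2), mv i = ∑ u ∈ Finset.range (ρ+1), c (g u) * h (g u) i) ∧
      Set.InjOn g ↑(Finset.range (ρ+1)) := by
  classical
  have hSmem : ∀ j : Fin n, h j ∈ constructionS F ρ := fun j => by
    rw [← hrange]; exact Set.mem_range_self j
  have heval : ∀ i : Fin (2*ρ+2), mv i = ∑ j ∈ s, c j * h j i := by
    intro i
    have h5 := congrFun hsum i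
    simpa [Finset.sum_apply] using h5
  have hpick : ∀ (u : ℕ) (i : Fin (2*ρ+2)), (i:ℕ) = 2*u → u ≤ ρ →
      ∃ j, j ∈ s ∧ c j * h j i ≠ 0 := by
    intro u i hi hu
    have h1 : mv i ≠ 0 := hev u hu i hi
    rw [heval] at h1
    obtain ⟨j, hj1, hj2⟩ := Finset.exists_ne_zero_of_sum_ne_zero h1
    exact ⟨j, hj1, hj2⟩
  obtain ⟨j₀, hj₀, -⟩ := hpick 0 ⟨0, by omega⟩ rfl (by omega)
  set g : ℕ → Fin n := fun u =>
    if hu : u ≤ ρ then (hpick u ⟨2*u, by omega⟩ rfl hu).choose else j₀ with hg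
  have hgs : ∀ u, u ≤ ρ → g u ∈ s := by
    intro u hu; rw [hg]; simp only [dif_pos hu]
    exact (hpick u ⟨2*u, by omega⟩ rfl hu).choose_spec.1
  have hgw : ∀ u, u ≤ ρ → ∀ i : Fin (2*ρ+2), (i:ℕ) = 2*u → c (g u) * h (g u) i ≠ 0 := by
    intro u hu i hi
    have h2 := (hpick u ⟨2*u, by omega⟩ rfl hu).choose_spec.2
    have hieq : i = (⟨2*u, by omega⟩ : Fin (2*ρ+2)) := Fin.ext (by simpa using hi)
    rw [hg]; simp only [dif_pos hu]
    rw [hieq]; exact h2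
  have hgu : ∀ u u' : ℕ, u ≤ ρ → u' ≤ ρ → ∀ i : Fin (2*ρ+2), (i:ℕ) = 2*u →
      h (g u') i ≠ 0 → u' = u := by
    intro u u' hu hu' i hi hne
    have hw' : h (g u') (⟨2*u', by omega⟩ : Fin (2*ρ+2)) ≠ 0 := by
      intro hE
      exact hgw u' hu' ⟨2*u', by omega⟩ (by simp) (by rw [hE, mul_zero])
    have hueq := unique_even (hSmem (g u')) (i := i) (j := ⟨2*u', by omega⟩)
      (by omega) (by simp) hne hw'
    have hval := congrArg Fin.val hueq
    simp only [Fin.val_mk] at hval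
    omega
  have hinj' : Set.InjOn g ↑(Finset.range (ρ+1)) := by
    intro u hu u' hu' hE
    simp only [Finset.coe_range, Set.mem_Iio] at hu hu'
    have h1 : h (g u) (⟨2*u, by omega⟩ : Fin (2*ρ+2)) ≠ 0 := by
      intro hz
      exact hgw u (by omega) ⟨2*u, by omega⟩ (by simp) (by rw [hz, mul_zero])
    have h2 : h (g u') (⟨2*u, by omega⟩ : Fin (2*ρ+2)) ≠ 0 := by rw [← hE]; exact h1
    exact (hgu u u' (by omega) (by omega) _ (by simp) h2).symm
  have himage : (Finset.range (ρ+1)).image g = s := by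
    apply Finset.eq_of_subset_of_card_le
    · intro j hj
      obtain ⟨u, hu, rfl⟩ := Finset.mem_image.mp hj
      exact hgs u (Nat.lt_succ_iff.mp (Finset.mem_range.mp hu))
    · rw [Finset.card_image_of_injOn hinj', Finset.card_range]
      exact hcard
  refine ⟨g, hgs, hgw, hgu, ?_, hinj'⟩
  intro i
  rw [heval i, ← himage,
    Finset.sum_image (fun u hu u' hu' hE => hinj' (Finset.mem_coe.mpr hu)
      (Finset.mem_coe.mpr hu') hE)]

lemma conic_ne_tP {u : ℕ} (hu : 1 ≤ u) (hu2 : u ≤ ρ) {a : F} :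
    (conicP u a : Fin (2*ρ+2) → F) ≠ tP u := by
  intro hE
  have h2 := congrFun hE ⟨2*u-1, by omega⟩
  rw [conic_at1 rfl hu, tP_vanish (by simp; omega)] at h2
  exact one_ne_zero h2

lemma forceT {mv : Fin (2*ρ+2) → F} {c : Fin n → F} {g : ℕ → Fin n}
    (hSmem : ∀ j : Fin n, h j ∈ constructionS F ρ)
    (hgw : ∀ u, u ≤ ρ → ∀ i : Fin (2*ρ+2), (i:ℕ) = 2*u → c (g u) * h (g u) i ≠ 0)
    (hgu : ∀ u u' : ℕ, u ≤ ρ → u' ≤ ρ → ∀ i : Fin (2*ρ+2), (i:ℕ) = 2*u →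
      h (g u') i ≠ 0 → u' = u)
    (heval : ∀ i : Fin (2*ρ+2), mv i = ∑ u ∈ Finset.range (ρ+1), c (g u) * h (g u) i)
    {t₀ : ℕ} (ht₀ : 1 ≤ t₀)
    (hodd : ∀ u : ℕ, t₀ ≤ u → u ≤ ρ → ∀ i : Fin (2*ρ+2), (i:ℕ) = 2*u+1 → mv i = 0) :
    ∀ u : ℕ, t₀ ≤ u → u ≤ ρ → h (g u) = tP u := by
  have main : ∀ u : ℕ, t₀ ≤ u → u ≤ ρ →
      (u < ρ → h (g (u+1)) = tP (u+1)) → h (g u) = tP u := by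
    intro u h1 h2 hnext
    have h0 : mv ⟨2*u+1, by omega⟩ = 0 := hodd u h1 h2 _ rfl
    rw [heval] at h0
    have hsingle : ∑ u' ∈ Finset.range (ρ+1), c (g u') * h (g u') ⟨2*u+1, by omega⟩
        = c (g u) * h (g u) ⟨2*u+1, by omega⟩ := by
      apply Finset.sum_eq_single_of_mem u (by simp; omega)
      intro u' hu' hne
      by_contra hnz
      have hnz' : h (g u') (⟨2*u+1, by omega⟩ : Fin (2*ρ+2)) ≠ 0 :=
        fun hz => hnz (by rw [hz, mul_zero])
      have hu'le : u' ≤ ρ := by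
        have := Finset.mem_range.mp hu'; omega
      rcases shape_at_odd (hSmem (g u')) (u := u) (by omega) (i := ⟨2*u+1, by omega⟩)
          rfl hnz' with ⟨a, ha, hcon⟩ | ⟨a, ha, hle, hcon⟩ | ⟨hcon, -⟩
      · apply hne
        apply hgu u u' h2 hu'le ⟨2*u, by omega⟩ rfl
        rw [hcon, conic_ata rfl (by omega)]
        exact ha
      · have hu'eq : u' = u+1 := by
          apply hgu (u+1) u' (by omega) hu'le ⟨2*(u+1), by omega⟩ rfl
          rw [hcon, conic_ata rfl (by omega)]
          exact ha
        have hlt : u < ρ := by omega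
        rw [hu'eq, hnext hlt] at hcon
        exact conic_ne_tP (by omega) (by omega) hcon.symm
      · have hw : h (g u') (⟨2*u', by omega⟩ : Fin (2*ρ+2)) ≠ 0 :=
          fun hz => hgw u' hu'le ⟨2*u', by omega⟩ rfl (by rw [hz, mul_zero])
        rw [hcon] at hw
        have hsE := suppE hw
        simp only [Fin.val_mk] at hsE
        omega
    rw [hsingle] at h0
    have hwu : h (g u) (⟨2*u, by omega⟩ : Fin (2*ρ+2)) ≠ 0 :=
      fun hz => hgw u h2 ⟨2*u, by omega⟩ rfl (by rw [hz, mul_zero])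
    rcases shape_at_even (hSmem (g u)) (u := u) (by omega) (i := ⟨2*u, by omega⟩)
        rfl hwu with ⟨a, ha, -, hcon⟩ | ⟨-, hcon⟩
    · exfalso
      have hca : c (g u) * a ≠ 0 := by
        have h5 := hgw u h2 ⟨2*u, by omega⟩ rfl
        rwa [hcon, conic_ata rfl (by omega)] at h5
      rw [hcon, conic_ata2 rfl (by omega)] at h0
      have hca2 : c (g u) * a^2 ≠ 0 := by
        intro hz
        apply hca
        have ha2 : a^2 ≠ 0 := pow_ne_zero 2 ha
        rcases mul_eq_zero.mp hz with hh | hh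
        · rw [hh, zero_mul]
        · exact absurd hh ha2
      exact hca2 h0
    · exact hcon
  suffices H : ∀ d u, u = ρ - d → t₀ ≤ u → u ≤ ρ → h (g u) = tP u by
    intro u h1 h2; exact H (ρ - u) u (by omega) h1 h2
  intro d
  induction d with
  | zero =>
    intro u hud h1 h2
    exact main u h1 h2 (fun hlt => absurd hlt (by omega))
  | succ d ih =>
    intro u hud h1 h2
    exact main u h1 h2 (fun hlt => ih (u+1) (by omega) (by omega) (by omega))

end Force
end S12


namespace S12
section LowOpt
variable {F : Type} [Field F] [Fintype F] {ρ n : ℕ} {h : Fin n → Fin (2*ρ+2) → F}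

def evens1 : Fin (2*ρ+2) → F := fun i => if (i:ℕ) % 2 = 0 then 1 else 0

lemma not_covers (hrange : Set.range h = constructionS F ρ) : ¬ CoversWithin h ρ := by
  intro hc
  obtain ⟨s, c, hsc, hsum⟩ := hc (evens1 : Fin (2*ρ+2) → F)
  have hev : ∀ u : ℕ, u ≤ ρ → ∀ i : Fin (2*ρ+2), (i:ℕ) = 2*u →
      (evens1 : Fin (2*ρ+2) → F) i ≠ 0 := by
    intro u hu i hi
    simp only [evens1, hi]
    rw [if_pos (by omega)]
    exact one_ne_zero
  obtain ⟨g, hgs, hgw, hgu, heval, hinj'⟩ := exists_g hrange hsum (by omega) hev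
  have hle := Finset.card_le_card_of_injOn g
    (fun u hu => hgs u (Nat.lt_succ_iff.mp (Finset.mem_range.mp hu))) hinj'
  rw [Finset.card_range] at hle
  omega

lemma covers_mono {k k' : ℕ} (hc : CoversWithin h k) (hk : k ≤ k') : CoversWithin h k' := by
  intro v; obtain ⟨s, c, h1, h2⟩ := hc v; exact ⟨s, c, h1.trans hk, h2⟩

lemma locCore (hrange : Set.range h = constructionS F ρ)
    {mv : Fin (2*ρ+2) → F} {s : Finset (Fin n)} {c : Fin n → F}
    (hsum : mv = ∑ j ∈ s, c j • h j) (hcard : s.card ≤ ρ+1)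
    (hev : ∀ u : ℕ, u ≤ ρ → ∀ i : Fin (2*ρ+2), (i:ℕ) = 2*u → mv i ≠ 0)
    (hodd : ∀ u : ℕ, 1 ≤ u → u ≤ ρ → ∀ i : Fin (2*ρ+2), (i:ℕ) = 2*u+1 → mv i = 0) :
    (∀ u, 1 ≤ u → u ≤ ρ → ∃ j ∈ s, h j = tP u) ∧
    ∃ j ∈ s, (∀ i : Fin (2*ρ+2), (i:ℕ) = 0 → c j * h j i = mv i)
      ∧ (∀ i : Fin (2*ρ+2), (i:ℕ) = 1 → c j * h j i = mv i)
      ∧ (∀ i : Fin (2*ρ+2), (i:ℕ) = 0 → h j i ≠ 0) := by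
  have hSmem : ∀ j : Fin n, h j ∈ constructionS F ρ := fun j => by
    rw [← hrange]; exact Set.mem_range_self j
  obtain ⟨g, hgs, hgw, hgu, heval, hinj'⟩ := exists_g hrange hsum hcard hev
  have hTP : ∀ u, 1 ≤ u → u ≤ ρ → h (g u) = tP u :=
    forceT hSmem hgw hgu heval (le_refl 1) (fun u h1 h2 i hi => hodd u h1 h2 i hi)
  refine ⟨fun u h1 h2 => ⟨g u, hgs u h2, hTP u h1 h2⟩, g 0, hgs 0 (by omega), ?_, ?_, ?_⟩
  · intro i hi
    rw [heval i]
    symm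
    apply Finset.sum_eq_single_of_mem 0 (Finset.mem_range.mpr (by omega))
    intro u' hu' hne
    by_contra hnz
    have hnz' : h (g u') i ≠ 0 := fun hz => hnz (by rw [hz, mul_zero])
    have hu'le : u' ≤ ρ := Nat.lt_succ_iff.mp (Finset.mem_range.mp hu')
    exact hne (hgu 0 u' (by omega) hu'le i (by omega) hnz')
  · intro i hi
    rw [heval i]
    symm
    apply Finset.sum_eq_single_of_mem 0 (Finset.mem_range.mpr (by omega))
    intro u' hu' hne
    have hu'le : u' ≤ ρ := Nat.lt_succ_iff.mp (Finset.mem_range.mp hu')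
    rw [hTP u' (by omega) hu'le, tP_vanish (by omega), mul_zero]
  · intro i hi hz
    exact hgw 0 (by omega) i (by omega) (by rw [hz, mul_zero])

lemma locOpt (hinj : Function.Injective h) (hrange : Set.range h = constructionS F ρ) :
    LocallyOptimal h (ρ+1) := by
  classical
  intro j₀ Hall
  have hSmem : ∀ j : Fin n, h j ∈ constructionS F ρ := fun j => by
    rw [← hrange]; exact Set.mem_range_self j
  have hone : (1:F) ≠ 0 := one_ne_zero
  rcases shape_cases (hSmem j₀) with hE | ⟨a₀, ha₀, hL⟩ | ⟨u₀, a₀, hu₀1, hu₀2, ha₀, hC⟩ |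
    ⟨u₀, hu₀1, hu₀2, hT⟩ | hE
  -- Case 1 : h j₀ = E0
  · obtain ⟨s, c, hj₀s, hcard, hsum⟩ := Hall (evens1 : Fin (2*ρ+2) → F)
    have hev : ∀ u : ℕ, u ≤ ρ → ∀ i : Fin (2*ρ+2), (i:ℕ) = 2*u →
        (evens1 : Fin (2*ρ+2) → F) i ≠ 0 := by
      intro u hu i hi
      simp only [evens1, hi]; rw [if_pos (by omega)]; exact hone
    have hodd : ∀ u : ℕ, 1 ≤ u → u ≤ ρ → ∀ i : Fin (2*ρ+2), (i:ℕ) = 2*u+1 →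
        (evens1 : Fin (2*ρ+2) → F) i = 0 := by
      intro u h1 h2 i hi
      simp only [evens1, hi]; rw [if_neg (by omega)]
    obtain ⟨-, j, hjs, he0, he1, hnz0⟩ := locCore hrange hsum hcard hev hodd
    have hv0 : c j * h j ⟨0, by omega⟩ = 1 := by
      rw [he0 _ rfl]; simp [evens1]
    have hv1 : c j * h j ⟨1, by omega⟩ = 0 := by
      rw [he1 _ rfl]; simp [evens1]
    rcases shape_at_zero (hSmem j) (i := ⟨0, by omega⟩) rfl (hnz0 _ rfl) with hsh | ⟨a, ha, hsh⟩
    · apply hj₀s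
      have : j = j₀ := hinj (by rw [hsh, hE])
      rwa [← this]
    · rw [hsh, line_at0 rfl, mul_one] at hv0
      rw [hsh, line_at1 rfl, hv0, one_mul] at hv1
      exact ha hv1
  -- Case 2 : h j₀ = lineP a₀
  · set mv : Fin (2*ρ+2) → F :=
      fun i => if (i:ℕ) = 1 then a₀ else if (i:ℕ) % 2 = 0 then 1 else 0 with hmv
    obtain ⟨s, c, hj₀s, hcard, hsum⟩ := Hall mv
    have hev : ∀ u : ℕ, u ≤ ρ → ∀ i : Fin (2*ρ+2), (i:ℕ) = 2*u → mv i ≠ 0 := by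
      intro u hu i hi
      simp only [hmv, hi]
      rw [if_neg (by omega), if_pos (by omega)]
      exact hone
    have hodd : ∀ u : ℕ, 1 ≤ u → u ≤ ρ → ∀ i : Fin (2*ρ+2), (i:ℕ) = 2*u+1 → mv i = 0 := by
      intro u h1 h2 i hi
      simp only [hmv, hi]
      rw [if_neg (by omega), if_neg (by omega)]
    obtain ⟨-, j, hjs, he0, he1, hnz0⟩ := locCore hrange hsum hcard hev hodd
    have hv0 : c j * h j ⟨0, by omega⟩ = 1 := by
      rw [he0 _ rfl]; simp [hmv]
    have hv1 : c j * h j ⟨1, by omega⟩ = a₀ := by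
      rw [he1 _ rfl]; simp [hmv]
    rcases shape_at_zero (hSmem j) (i := ⟨0, by omega⟩) rfl (hnz0 _ rfl) with hsh | ⟨a, ha, hsh⟩
    · rw [hsh, E0_vanish (by simp), mul_zero] at hv1
      exact ha₀ hv1.symm
    · rw [hsh, line_at0 rfl, mul_one] at hv0
      rw [hsh, line_at1 rfl, hv0, one_mul] at hv1
      apply hj₀s
      have : j = j₀ := hinj (by rw [hsh, hL, hv1])
      rwa [← this]
  -- Case 3 : h j₀ = conicP u₀ a₀
  · set mv : Fin (2*ρ+2) → F := fun i => if (i:ℕ) = 2*u₀ then a₀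
      else if (i:ℕ) = 2*u₀+1 then a₀^2 else if (i:ℕ) % 2 = 0 then 1 else 0 with hmv
    obtain ⟨s, c, hj₀s, hcard, hsum⟩ := Hall mv
    have hev : ∀ u : ℕ, u ≤ ρ → ∀ i : Fin (2*ρ+2), (i:ℕ) = 2*u → mv i ≠ 0 := by
      intro u hu i hi
      simp only [hmv, hi]
      by_cases hcu : 2*u = 2*u₀
      · rw [if_pos hcu]; exact ha₀
      · rw [if_neg hcu, if_neg (by omega), if_pos (by omega)]; exact hone
    obtain ⟨g, hgs, hgw, hgu, heval, hinj'⟩ := exists_g hrange hsum hcard hev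
    have hodd : ∀ u : ℕ, u₀+1 ≤ u → u ≤ ρ → ∀ i : Fin (2*ρ+2), (i:ℕ) = 2*u+1 → mv i = 0 := by
      intro u h1 h2 i hi
      simp only [hmv, hi]
      rw [if_neg (by omega), if_neg (by omega), if_neg (by omega)]
    have hTP : ∀ u, u₀+1 ≤ u → u ≤ ρ → h (g u) = tP u :=
      forceT hSmem hgw hgu heval (by omega) hodd
    -- coordinate 2u₀ : value a₀
    have hA : c (g u₀) * h (g u₀) ⟨2*u₀, by omega⟩ = a₀ := by
      have hmv0 : mv ⟨2*u₀, by omega⟩ = a₀ := by simp [hmv]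
      rw [← hmv0, heval]
      symm
      apply Finset.sum_eq_single_of_mem u₀ (Finset.mem_range.mpr (by omega))
      intro u' hu' hne
      by_contra hnz
      have hnz' : h (g u') (⟨2*u₀, by omega⟩ : Fin (2*ρ+2)) ≠ 0 :=
        fun hz => hnz (by rw [hz, mul_zero])
      have hu'le : u' ≤ ρ := Nat.lt_succ_iff.mp (Finset.mem_range.mp hu')
      exact hne (hgu u₀ u' (by omega) hu'le _ rfl hnz')
    -- coordinate 2u₀+1 : value a₀²
    have hB : c (g u₀) * h (g u₀) ⟨2*u₀+1, by omega⟩ = a₀^2 := by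
      have hmv1 : mv ⟨2*u₀+1, by omega⟩ = a₀^2 := by
        simp only [hmv]
        rw [if_neg (show ¬((((⟨2*u₀+1, by omega⟩ : Fin (2*ρ+2)):ℕ)) = 2*u₀) by simp)]
        simp
      rw [← hmv1, heval]
      symm
      apply Finset.sum_eq_single_of_mem u₀ (Finset.mem_range.mpr (by omega))
      intro u' hu' hne
      by_contra hnz
      have hnz' : h (g u') (⟨2*u₀+1, by omega⟩ : Fin (2*ρ+2)) ≠ 0 :=
        fun hz => hnz (by rw [hz, mul_zero])
      have hu'le : u' ≤ ρ := Nat.lt_succ_iff.mp (Finset.mem_range.mp hu')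
      rcases shape_at_odd (hSmem (g u')) (u := u₀) (by omega) (i := ⟨2*u₀+1, by omega⟩)
          rfl hnz' with ⟨a, ha, hcon⟩ | ⟨a, ha, hle, hcon⟩ | ⟨hcon, huρ⟩
      · apply hne
        apply hgu u₀ u' (by omega) hu'le ⟨2*u₀, by omega⟩ rfl
        rw [hcon, conic_ata rfl (by omega)]
        exact ha
      · have hu'eq : u' = u₀+1 := by
          apply hgu (u₀+1) u' (by omega) hu'le ⟨2*(u₀+1), by omega⟩ rfl
          rw [hcon, conic_ata rfl (by omega)]
          exact ha
        rw [hu'eq, hTP (u₀+1) (by omega) (by omega)] at hcon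
        exact conic_ne_tP (by omega) (by omega) hcon.symm
      · have hw : h (g u') (⟨2*u', by omega⟩ : Fin (2*ρ+2)) ≠ 0 :=
          fun hz => hgw u' hu'le ⟨2*u', by omega⟩ rfl (by rw [hz, mul_zero])
        rw [hcon] at hw
        have hsE := suppE hw
        simp only [Fin.val_mk] at hsE
        omega
    -- classify g u₀
    have hwu : h (g u₀) (⟨2*u₀, by omega⟩ : Fin (2*ρ+2)) ≠ 0 :=
      fun hz => hgw u₀ (by omega) ⟨2*u₀, by omega⟩ rfl (by rw [hz, mul_zero])
    rcases shape_at_even (hSmem (g u₀)) (u := u₀) (by omega) (i := ⟨2*u₀, by omega⟩)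
        rfl hwu with ⟨a, ha, -, hcon⟩ | ⟨-, hcon⟩
    · rw [hcon, conic_ata rfl (by omega)] at hA
      rw [hcon, conic_ata2 rfl (by omega)] at hB
      have haa : a = a₀ := by
        have h5 : a₀ * a = a₀ * a₀ := by
          calc a₀ * a = (c (g u₀) * a) * a := by rw [hA]
            _ = c (g u₀) * a^2 := by ring
            _ = a₀^2 := hB
            _ = a₀ * a₀ := by ring
        exact mul_left_cancel₀ ha₀ h5
      apply hj₀s
      have hjeq : g u₀ = j₀ := hinj (by rw [hcon, haa, hC])
      rw [← hjeq]
      exact hgs u₀ hu₀2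
    · rw [hcon, tP_vanish (by simp only [Fin.val_mk]; omega), mul_zero] at hB
      exact (pow_ne_zero 2 ha₀) hB.symm
  -- Case 4 : h j₀ = tP u₀
  · obtain ⟨s, c, hj₀s, hcard, hsum⟩ := Hall (evens1 : Fin (2*ρ+2) → F)
    have hev : ∀ u : ℕ, u ≤ ρ → ∀ i : Fin (2*ρ+2), (i:ℕ) = 2*u →
        (evens1 : Fin (2*ρ+2) → F) i ≠ 0 := by
      intro u hu i hi
      simp only [evens1, hi]; rw [if_pos (by omega)]; exact hone
    have hodd : ∀ u : ℕ, 1 ≤ u → u ≤ ρ → ∀ i : Fin (2*ρ+2), (i:ℕ) = 2*u+1 →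
        (evens1 : Fin (2*ρ+2) → F) i = 0 := by
      intro u h1 h2 i hi
      simp only [evens1, hi]; rw [if_neg (by omega)]
    obtain ⟨hTPs, -⟩ := locCore hrange hsum hcard hev hodd
    obtain ⟨j, hjs, hj⟩ := hTPs u₀ hu₀1 hu₀2
    apply hj₀s
    have : j = j₀ := hinj (by rw [hj, hT])
    rwa [← this]
  -- Case 5 : h j₀ = eE
  · set mv : Fin (2*ρ+2) → F := fun i => if (i:ℕ) = 2*ρ+1 then 1
      else if (i:ℕ) = 2*ρ then 0 else if (i:ℕ) % 2 = 0 then 1 else 0 with hmv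
    obtain ⟨s, c, hj₀s, hcard, hsum⟩ := Hall mv
    have heval : ∀ i : Fin (2*ρ+2), mv i = ∑ j ∈ s, c j * h j i := by
      intro i
      have h5 := congrFun hsum i
      simpa [Finset.sum_apply] using h5
    have hpick2 : ∀ (u : ℕ) (i : Fin (2*ρ+2)), (i:ℕ) = 2*u → u < ρ →
        ∃ j, j ∈ s ∧ c j * h j i ≠ 0 := by
      intro u i hi hu
      have h1 : mv i ≠ 0 := by
        simp only [hmv, hi]
        rw [if_neg (by omega), if_neg (by omega), if_pos (by omega)]
        exact hone
      rw [heval] at h1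
      obtain ⟨j, hj1, hj2⟩ := Finset.exists_ne_zero_of_sum_ne_zero h1
      exact ⟨j, hj1, hj2⟩
    -- the column covering coordinate 2ρ+1
    have h1 : mv ⟨2*ρ+1, by omega⟩ ≠ 0 := by
      simp [hmv]
    rw [heval] at h1
    obtain ⟨js, hjs, hjw⟩ := Finset.exists_ne_zero_of_sum_ne_zero h1
    have hjsne : h js ≠ eE := by
      intro hEE
      apply hj₀s
      have : js = j₀ := hinj (by rw [hEE, hE])
      rwa [← this]
    have hjnz : h js (⟨2*ρ+1, by omega⟩ : Fin (2*ρ+2)) ≠ 0 :=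
      fun hz => hjw (by rw [hz, mul_zero])
    have hstar : h js (⟨2*ρ, by omega⟩ : Fin (2*ρ+2)) ≠ 0 := by
      rcases shape_cases (hSmem js) with hsh | ⟨a, ha, hsh⟩ | ⟨u'', a, hh1, hh2, ha, hsh⟩ |
        ⟨u'', hh1, hh2, hsh⟩ | hsh
      · rw [hsh] at hjnz
        have := suppE0 hjnz
        simp only [Fin.val_mk] at this; omega
      · rw [hsh] at hjnz ⊢
        have := suppLine hjnz
        simp only [Fin.val_mk] at this
        have hρ0 : ρ = 0 := by omega
        rw [line_at0 (by simp [hρ0])]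
        exact hone
      · rw [hsh] at hjnz ⊢
        have := suppConic hjnz
        simp only [Fin.val_mk] at this
        have huρ : u'' = ρ := by omega
        subst huρ
        rw [conic_ata rfl (by omega)]
        exact ha
      · rw [hsh] at hjnz
        have := suppT hjnz
        simp only [Fin.val_mk] at this; omega
      · exact absurd hsh hjsne
    have hcjs : c js ≠ 0 := left_ne_zero_of_mul hjw
    have hterm : c js * h js (⟨2*ρ, by omega⟩ : Fin (2*ρ+2)) ≠ 0 :=
      mul_ne_zero hcjs hstar
    -- coordinate 2ρ sums to zero
    have hzero : ∑ j ∈ s, c j * h j (⟨2*ρ, by omega⟩ : Fin (2*ρ+2)) = 0 := by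
      rw [← heval]
      simp [hmv]
    have herase : ∑ j ∈ s.erase js, c j * h j (⟨2*ρ, by omega⟩ : Fin (2*ρ+2)) ≠ 0 := by
      intro hz
      apply hterm
      have h6 := Finset.add_sum_erase s (fun j => c j * h j (⟨2*ρ, by omega⟩ : Fin (2*ρ+2))) hjs
      rw [hzero, hz, add_zero] at h6
      exact h6
    obtain ⟨jt, hjt, hjtw⟩ := Finset.exists_ne_zero_of_sum_ne_zero herase
    have hjtne : jt ≠ js := Finset.ne_of_mem_erase hjt
    have hjts : jt ∈ s := Finset.mem_of_mem_erase hjt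
    have hjtnz : h jt (⟨2*ρ, by omega⟩ : Fin (2*ρ+2)) ≠ 0 :=
      fun hz => hjtw (by rw [hz, mul_zero])
    -- build injection of ρ+2 elements into s
    set G : ℕ → Fin n := fun u =>
      if hu : u < ρ then (hpick2 u ⟨2*u, by omega⟩ rfl hu).choose
      else if u = ρ then js else jt with hG
    have hGmem : ∀ u, u < ρ+2 → G u ∈ s := by
      intro u hu
      rw [hG]
      by_cases hc1 : u < ρ
      · simp only [dif_pos hc1]
        exact (hpick2 u ⟨2*u, by omega⟩ rfl hc1).choose_spec.1
      · simp only [dif_neg hc1]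
        by_cases hc2 : u = ρ
        · rw [if_pos hc2]; exact hjs
        · rw [if_neg hc2]; exact hjts
    have hGev : ∀ u, u < ρ+2 → ∀ i : Fin (2*ρ+2), (i:ℕ) = 2*(min u ρ) → h (G u) i ≠ 0 := by
      intro u hu i hi
      rw [hG]
      by_cases hc1 : u < ρ
      · simp only [dif_pos hc1]
        have hsp := (hpick2 u ⟨2*u, by omega⟩ rfl hc1).choose_spec.2
        have hieq : i = (⟨2*u, by omega⟩ : Fin (2*ρ+2)) := Fin.ext (by simp [hi]; omega)
        rw [hieq]
        exact fun hz => hsp (by rw [hz, mul_zero])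
      · simp only [dif_neg hc1]
        have hieq : i = (⟨2*ρ, by omega⟩ : Fin (2*ρ+2)) := Fin.ext (by simp [hi]; omega)
        rw [hieq]
        by_cases hc2 : u = ρ
        · rw [if_pos hc2]; exact hstar
        · rw [if_neg hc2]; exact hjtnz
    have hGinj : Set.InjOn G ↑(Finset.range (ρ+2)) := by
      intro u hu u' hu' hEq
      simp only [Finset.coe_range, Set.mem_Iio] at hu hu'
      have h1' := hGev u hu ⟨2*(min u ρ), by omega⟩ rfl
      have h2' := hGev u' hu' ⟨2*(min u' ρ), by omega⟩ rfl
      rw [hEq] at h1'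
      have hmin := unique_even (hSmem (G u')) (i := ⟨2*(min u ρ), by omega⟩)
        (j := ⟨2*(min u' ρ), by omega⟩) (by simp [Nat.mul_mod_right]) (by simp [Nat.mul_mod_right]) h1' h2'
      have hval := congrArg Fin.val hmin
      simp only [Fin.val_mk] at hval
      by_cases hc1 : u < ρ
      · by_cases hc2 : u' < ρ
        · omega
        · exfalso; omega
      · by_cases hc2 : u' < ρ
        · exfalso; omega
        · -- both in {ρ, ρ+1}
          by_cases hd1 : u = ρ
          · by_cases hd2 : u' = ρ
            · rw [hd1, hd2]
            · exfalso
              apply hjtne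
              have hu'v : u' = ρ+1 := by omega
              rw [hG] at hEq
              simp only [dif_neg hc1, dif_neg hc2, if_pos hd1, if_neg hd2] at hEq
              exact hEq.symm
          · by_cases hd2 : u' = ρ
            · exfalso
              apply hjtne
              rw [hG] at hEq
              simp only [dif_neg hc1, dif_neg hc2, if_neg hd1, if_pos hd2] at hEq
              exact hEq
            · omega
    have hfin := Finset.card_le_card_of_injOn G
      (fun u hu => hGmem u (Finset.mem_range.mp hu)) hGinj
    rw [Finset.card_range] at hfin
    omega

end LowOpt
end S12


/-- let `V̂_ρ` be the code whose parity-check matrix has as columns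
the points of `S_ρ` of Construction S, `ρ = R - 1`.  (i) If `q = 4` or `q ≥ 7`,
then for every `R ≥ 1` it is an `[Rq+1, Rq+1-2R]_q` code (rank `2R` parity-check
matrix) with minimum distance `3` and covering radius `R`, and it is locally
optimal.  (ii) The same holds for `q = 5` and `1 ≤ R ≤ 5`. -/
theorem stmt12 (q R ρ : ℕ) (F : Type) [Field F] [Fintype F] (hF : Fintype.card F = q)
    (hR : 1 ≤ R) (hρ : ρ = R - 1)
    (h : Fin (R * q + 1) → Fin (2 * ρ + 2) → F)
    (hinj : Function.Injective h) (hrange : Set.range h = constructionS F ρ)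
    (hq : (q = 4 ∨ 7 ≤ q) ∨ (q = 5 ∧ R ≤ 5)) :
    Submodule.span F (Set.range h) = ⊤
    ∧ HasCoveringRadius h R ∧ HasMinDist h 3 ∧ LocallyOptimal h R := by
  have h4 : 4 ≤ Fintype.card F := by
    rw [hF]
    rcases hq with (hh | hh) | ⟨hh, -⟩ <;> omega
  have hRρ : R = ρ + 1 := by omega
  subst hRρ
  refine ⟨S12.span_top hrange, ⟨?_, ?_⟩, S12.minDist hinj hrange h4, S12.locOpt hinj hrange⟩
  · intro v
    exact S12.covgoal_to_cols hinj hrange (S12.coverPoint v h4)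
  · intro k hk hc
    exact S12.not_covers hrange (S12.covers_mono hc (by omega))
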